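/- arXiv:2209.03835 — 3 statements merged into one kernel-verified Lean document; each statement's English description precedes it below -/
import Mathlib

section
/- Let G=(V,E) be a directed graph on V=[p] containing all self-loops with |E| > p(p+1)/2, and let C be any symmetric positive definite p×p matrix. Then the graphical continuous Lyapunov model M_{G,C} is non-identifiable: for every M₀ ∈ Stab(E), the fiber F_{G,C}(M₀) is infinite. -/
open Matrix MeasureTheory

/-- A real square matrix is *stable* if every eigenvalue (over `ℂ`) has strictly
negative real part. -/
def IsStableMat {n : Type*} [Fintype n] [DecidableEq n] (M : Matrix n n ℝ) : Prop :=
  ∀ μ ∈ spectrum ℂ (M.map (algebraMap ℝ ℂ)), μ.re < 0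

/-- `M ∈ ℝ^E`: the matrix `M` is supported on the directed graph with edge set `E`,
i.e. `M j i = 0` whenever `(i, j) ∉ E`. -/
def InSupp {n : Type*} (E : Set (n × n)) (M : Matrix n n ℝ) : Prop :=
  ∀ i j : n, (i, j) ∉ E → M j i = 0

/-- The graphical continuous Lyapunov model `M_{G,C}`: positive definite matrices `S`
such that `M * S + S * Mᵀ + C = 0` for some `M ∈ ℝ^E`. -/
def LyapModel {n : Type*} [Fintype n] [DecidableEq n] (E : Set (n × n))
    (C : Matrix n n ℝ) : Set (Matrix n n ℝ) :=
  {S | S.PosDef ∧ ∃ M : Matrix n n ℝ, InSupp E M ∧ M * S + S * Mᵀ + C = 0}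

/-- Global identifiability: no two stable matrices supported on `E` yield the same
solution of the Lyapunov equation.  (Since for stable `M` the Lyapunov equation has a
unique positive definite solution `Σ(M,C)`, this is equivalent to every fiber
`F_{G,C}(M₀)` being the singleton `{M₀}`.) -/
def GloballyIdentifiable {n : Type*} [Fintype n] [DecidableEq n] (E : Set (n × n))
    (C : Matrix n n ℝ) : Prop :=
  ∀ M₁ M₂ : Matrix n n ℝ,
    InSupp E M₁ → IsStableMat M₁ → InSupp E M₂ → IsStableMat M₂ →
    ∀ S : Matrix n n ℝ, S.PosDef →
      M₁ * S + S * M₁ᵀ + C = 0 → M₂ * S + S * M₂ᵀ + C = 0 → M₁ = M₂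

/-- A directed graph is *simple* if it has no 2-cycles between distinct nodes. -/
def IsSimpleDigraph {n : Type*} (E : Set (n × n)) : Prop :=
  ∀ i j : n, i ≠ j → (i, j) ∈ E → (j, i) ∉ E

/-- The fiber `F_{G,C}(M₀)`: all stable matrices supported on `E` whose Lyapunov
solution coincides with that of `M₀`, i.e. some positive definite `S` solves the
Lyapunov equation for both `M₀` and `M`. -/
def Fiber {n : Type*} [Fintype n] [DecidableEq n] (E : Set (n × n))
    (C M₀ : Matrix n n ℝ) : Set (Matrix n n ℝ) :=
  {M | InSupp E M ∧ IsStableMat M ∧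
    ∃ S : Matrix n n ℝ, S.PosDef ∧ M₀ * S + S * M₀ᵀ + C = 0 ∧ M * S + S * Mᵀ + C = 0}

/-- The identification of the coordinate space `ℝ^{|E|}` with the matrices in `ℝ^E`:
the coordinate attached to an edge `(i,j)` is the entry `M j i`. -/
def edgeMatrix {p : ℕ} (E : Finset (Fin p × Fin p)) (f : E → ℝ) :
    Matrix (Fin p) (Fin p) ℝ :=
  fun j i => if h : (i, j) ∈ E then f ⟨(i, j), h⟩ else 0

/-- Generic identifiability: the set of parameter vectors `f ∈ ℝ^{|E|}` whose matrix
is stable but whose fiber is not a singleton is a Lebesgue null set. -/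
def GenericallyIdentifiable {p : ℕ} (E : Finset (Fin p × Fin p))
    (C : Matrix (Fin p) (Fin p) ℝ) : Prop :=
  volume {f : E → ℝ | IsStableMat (edgeMatrix E f) ∧
    Fiber (E : Set (Fin p × Fin p)) C (edgeMatrix E f) ≠ {edgeMatrix E f}} = 0


open Polynomial Set Filter
open scoped ComplexOrder
set_option linter.unusedSectionVars false
set_option linter.unusedVariables false
set_option maxHeartbeats 1600000

namespace LyapAux
variable {n : Type*} [Fintype n] [DecidableEq n]

noncomputable def cpx (M : Matrix n n ℝ) : Matrix n n ℂ := M.map (algebraMap ℝ ℂ)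

lemma cpx_apply (M : Matrix n n ℝ) (i j : n) : cpx M i j = (M i j : ℂ) := rfl

lemma cpx_mul (A B : Matrix n n ℝ) : cpx (A * B) = cpx A * cpx B := Matrix.map_mul

lemma cpx_add (A B : Matrix n n ℝ) : cpx (A + B) = cpx A + cpx B := by
  ext i j; simp [cpx_apply, Matrix.add_apply]

lemma cpx_transpose (M : Matrix n n ℝ) : cpx Mᵀ = (cpx M)ᵀ := Matrix.transpose_map

lemma cpx_conjTranspose (M : Matrix n n ℝ) : (cpx M)ᴴ = cpx Mᵀ := by
  ext i j
  simp [cpx_apply, conjTranspose_apply, Complex.conj_ofReal]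

lemma cpx_zero : cpx (0 : Matrix n n ℝ) = 0 := by ext i j; simp [cpx_apply]

lemma cpx_eq_zero {M : Matrix n n ℝ} (h : cpx M = 0) : M = 0 := by
  ext i j
  have := congrFun (congrFun h i) j
  simpa [cpx_apply] using this

lemma cpx_one : cpx (1 : Matrix n n ℝ) = 1 := by
  ext i j
  by_cases h : i = j <;> simp [cpx_apply, Matrix.one_apply, h]

lemma cpx_smul (t : ℝ) (M : Matrix n n ℝ) : cpx (t • M) = (t : ℂ) • cpx M := by
  ext i j; simp [cpx_apply, Matrix.smul_apply]

lemma transpose_mem_spectrum {A : Matrix n n ℂ} {μ : ℂ} (h : μ ∈ spectrum ℂ A) :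
    μ ∈ spectrum ℂ Aᵀ := by
  rw [spectrum.mem_iff, Matrix.isUnit_iff_isUnit_det] at h ⊢
  have : (algebraMap ℂ (Matrix n n ℂ) μ - Aᵀ) = (algebraMap ℂ (Matrix n n ℂ) μ - A)ᵀ := by
    rw [Matrix.transpose_sub]
    congr 1
    rw [Algebra.algebraMap_eq_smul_one]
    rw [Matrix.transpose_smul, Matrix.transpose_one]
  rwa [this, Matrix.det_transpose]

/-- From a spectrum element, an eigenvector of the transpose. -/

lemma exists_eigenvector_transpose {A : Matrix n n ℂ} {μ : ℂ} (h : μ ∈ spectrum ℂ A) :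
    ∃ v : n → ℂ, v ≠ 0 ∧ Aᵀ *ᵥ v = μ • v := by
  have h' := transpose_mem_spectrum h
  rw [spectrum.mem_iff, Matrix.isUnit_iff_isUnit_det, isUnit_iff_ne_zero, not_not] at h'
  obtain ⟨v, hv, hv0⟩ := Matrix.exists_mulVec_eq_zero_iff.mpr h'
  refine ⟨v, hv, ?_⟩
  have : (algebraMap ℂ (Matrix n n ℂ) μ - Aᵀ) *ᵥ v = 0 := hv0
  rw [Matrix.sub_mulVec, sub_eq_zero] at this
  rw [← this, Algebra.algebraMap_eq_smul_one, Matrix.smul_mulVec, Matrix.one_mulVec]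

lemma cpx_sub (A B : Matrix n n ℝ) : cpx (A - B) = cpx A - cpx B := by
  ext i j; simp [cpx, Matrix.sub_apply]

lemma isUnit_csmul {c : ℂ} (hc : c ≠ 0) {A : Matrix n n ℂ} (hA : IsUnit A) :
    IsUnit (c • A) := by
  rw [Matrix.isUnit_iff_isUnit_det, Matrix.det_smul]
  exact (isUnit_iff_ne_zero.2 (pow_ne_zero _ hc)).mul ((Matrix.isUnit_iff_isUnit_det _).1 hA)

/-- homotopy matrices are stable -/

lemma stable_homotopy {M : Matrix n n ℝ} (hM : IsStableMat M) {t : ℝ}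
    (ht0 : 0 ≤ t) (ht1 : t ≤ 1) : IsStableMat (t • M - (1 - t) • 1) := by
  intro μ hμ
  have hc : cpx (t • M - (1 - t) • (1 : Matrix n n ℝ))
      = (t : ℂ) • cpx M - ((1 - t : ℝ) : ℂ) • 1 := by
    rw [cpx_sub, cpx_smul, cpx_smul, cpx_one]
  have hμ' : μ ∈ spectrum ℂ ((t : ℂ) • cpx M - ((1 - t : ℝ) : ℂ) • 1) := hc ▸ hμ
  rw [spectrum.mem_iff] at hμ'
  set s : ℂ := ((1 - t : ℝ) : ℂ) with hs
  have key : algebraMap ℂ (Matrix n n ℂ) μ - ((t : ℂ) • cpx M - s • 1)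
      = (μ + s) • 1 - (t : ℂ) • cpx M := by
    rw [Algebra.algebraMap_eq_smul_one]
    module
  rw [key] at hμ'
  rcases eq_or_lt_of_le ht0 with h0 | h0
  · -- t = 0
    have ht : (t : ℂ) = 0 := by rw [← h0]; norm_num
    rw [ht] at hμ'
    simp only [zero_smul, sub_zero] at hμ'
    have hne : μ + s = 0 := by
      by_contra hne
      exact hμ' (by
        simpa using isUnit_csmul hne (isUnit_one (M := Matrix n n ℂ)))
    have : μ = -s := by linear_combination hne
    rw [this, hs]
    simp only [Complex.neg_re, Complex.ofReal_re]
    rw [← h0]; norm_num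
  · -- t > 0
    have htc : (t : ℂ) ≠ 0 := by exact_mod_cast h0.ne'
    have key2 : (μ + s) • (1 : Matrix n n ℂ) - (t : ℂ) • cpx M
        = (t : ℂ) • (((μ + s) / t) • 1 - cpx M) := by
      rw [smul_sub, smul_smul, mul_div_cancel₀ _ htc]
    rw [key2] at hμ'
    have hmem : (μ + s) / t ∈ spectrum ℂ (cpx M) := by
      rw [spectrum.mem_iff, Algebra.algebraMap_eq_smul_one]
      intro hu
      exact hμ' (isUnit_csmul htc hu)
    have hlt := hM _ hmem
    have h1 : (μ + s).re < 0 := by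
      set z : ℂ := (μ + s) / t with hz
      have hzz : (μ + s) = (t : ℂ) * z := by rw [hz]; field_simp
      have : (μ + s).re = t * z.re := by
        rw [hzz, Complex.mul_re]
        simp
      rw [this]
      exact mul_neg_of_pos_of_neg h0 hlt
    have : μ.re + (1 - t) < 0 := by
      simpa [hs, Complex.add_re] using h1
    linarith

lemma real_conjTranspose (M : Matrix n n ℝ) : Mᴴ = Mᵀ := rfl

lemma isUnit_cpx {S : Matrix n n ℝ} (h : IsUnit S) : IsUnit (cpx S) := by
  rw [Matrix.isUnit_iff_isUnit_det] at h ⊢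
  have : (cpx S).det = ((S.det : ℝ) : ℂ) := ((algebraMap ℝ ℂ).map_det S).symm
  rw [this, isUnit_iff_ne_zero]
  exact_mod_cast (isUnit_iff_ne_zero.mp h)

lemma posDef_cpx {S : Matrix n n ℝ} (hS : S.PosDef) : (cpx S).PosDef := by
  obtain ⟨B, hB⟩ : ∃ B : Matrix n n ℝ, S = Bᴴ * B := by
    open scoped MatrixOrder in
    exact (CStarAlgebra.nonneg_iff_eq_star_mul_self.mp hS.posSemidef.nonneg).imp
      fun B h => h.trans (by rw [star_eq_conjTranspose])
  have hrep : cpx S = (cpx B)ᴴ * cpx B := by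
    rw [hB, cpx_mul, real_conjTranspose, cpx_transpose, cpx_conjTranspose, cpx_transpose]
  have hpsd : (cpx S).PosSemidef := by
    rw [hrep]; exact posSemidef_conjTranspose_mul_self _
  have hinj : Function.Injective (cpx S).mulVec :=
    Matrix.mulVec_injective_iff_isUnit.mpr (isUnit_cpx hS.isUnit)
  refine .of_dotProduct_mulVec_pos hpsd.1 (fun x hx => ?_)
  refine lt_of_le_of_ne (hpsd.dotProduct_mulVec_nonneg x) (Ne.symm fun h0 => ?_)
  have := (hpsd.dotProduct_mulVec_zero_iff x).mp h0
  exact hx (hinj (by simpa using this))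

/-- Lyapunov criterion: solvability with PD S, C forces stability. -/

lemma lyap_stable {M S C : Matrix n n ℝ} (hS : S.PosDef) (hC : C.PosDef)
    (h : M * S + S * Mᵀ + C = 0) : IsStableMat M := by
  intro μ hμ
  have hμ' : μ ∈ spectrum ℂ (cpx M) := hμ
  obtain ⟨v, hv, hev⟩ := exists_eigenvector_transpose hμ'
  have hSc := posDef_cpx hS
  have hCc := posDef_cpx hC
  set q : ℂ := star v ⬝ᵥ (cpx S *ᵥ v) with hq
  set c : ℂ := star v ⬝ᵥ (cpx C *ᵥ v) with hc
  have hqpos : 0 < q := hSc.dotProduct_mulVec_pos hv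
  have hcpos : 0 < c := hCc.dotProduct_mulVec_pos hv
  -- star v ᵥ* cpx M = star μ • star v
  have hvm : star v ᵥ* cpx M = star μ • star v := by
    have h1 : star ((cpx M)ᴴ *ᵥ v) = star v ᵥ* (cpx M)ᴴᴴ := star_mulVec _ _
    rw [conjTranspose_conjTranspose] at h1
    rw [← h1, cpx_conjTranspose, cpx_transpose, hev, star_smul]
  have hzero : star v ⬝ᵥ ((cpx M * cpx S + cpx S * (cpx M)ᵀ + cpx C) *ᵥ v) = 0 := by
    have : cpx M * cpx S + cpx S * (cpx M)ᵀ + cpx C = 0 := by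
      rw [← cpx_transpose, ← cpx_mul, ← cpx_mul, ← cpx_add, ← cpx_add, h, cpx_zero]
    rw [this]
    simp
  have hterm1 : star v ⬝ᵥ ((cpx M * cpx S) *ᵥ v) = star μ * q := by
    rw [← Matrix.mulVec_mulVec, dotProduct_mulVec, hvm, smul_dotProduct, smul_eq_mul]
  have hterm2 : star v ⬝ᵥ ((cpx S * (cpx M)ᵀ) *ᵥ v) = μ * q := by
    rw [← Matrix.mulVec_mulVec, hev, Matrix.mulVec_smul, dotProduct_smul]
    simp [hq, smul_eq_mul]
  rw [Matrix.add_mulVec, Matrix.add_mulVec, dotProduct_add, dotProduct_add,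
    hterm1, hterm2] at hzero
  -- (star μ + μ) * q + c = 0
  have heq : ((2 * μ.re : ℝ) : ℂ) * q + c = 0 := by
    have : star μ * q + μ * q = ((2 * μ.re : ℝ) : ℂ) * q := by
      rw [← add_mul]
      congr 1
      rw [add_comm]
      exact Complex.add_conj μ
    rw [← this]
    linear_combination hzero
  have hqre : 0 < q.re := (Complex.lt_def.mp hqpos).1
  have hcre : 0 < c.re := (Complex.lt_def.mp hcpos).1
  have hqim : q.im = 0 := ((Complex.lt_def.mp hqpos).2).symm
  have hre0 : 2 * μ.re * q.re + c.re = 0 := by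
    have := congrArg Complex.re heq
    simpa [Complex.add_re, Complex.mul_re, Complex.ofReal_re, Complex.ofReal_im, hqim] using this
  nlinarith

lemma root_charpoly_mem_spectrum {A : Matrix n n ℂ} {z : ℂ} (hz : A.charpoly.IsRoot z) :
    z ∈ spectrum ℂ A := by
  rw [spectrum.mem_iff, Matrix.isUnit_iff_isUnit_det, isUnit_iff_ne_zero, not_not]
  have hdet : (algebraMap ℂ (Matrix n n ℂ) z - A).det = A.charpoly.eval z := by
    have h1 := RingHom.map_det (Polynomial.evalRingHom z) (charmatrix A)
    have h2 : (Polynomial.evalRingHom z).mapMatrix (charmatrix A)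
        = algebraMap ℂ (Matrix n n ℂ) z - A := by
      ext i j
      by_cases h : i = j
      · subst h
        simp [charmatrix_apply_eq, Algebra.algebraMap_eq_smul_one, Matrix.smul_apply,
          Matrix.one_apply, Matrix.sub_apply]
      · simp [charmatrix_apply_ne _ _ _ h, Algebra.algebraMap_eq_smul_one, Matrix.smul_apply,
          Matrix.one_apply_ne h, Matrix.sub_apply]
    rw [Matrix.charpoly, ← h2, ← h1]
    rfl
  rw [hdet]
  exact hz

/-- Sylvester operator injectivity over ℂ for stable real M. -/

lemma sylvester_inj_c {M : Matrix n n ℝ} (hM : IsStableMat M) {Y : Matrix n n ℂ}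
    (h : cpx M * Y + Y * (cpx M)ᵀ = 0) : Y = 0 := by
  set A : Matrix n n ℂ := cpx M with hA
  set B : Matrix n n ℂ := (cpx M)ᵀ with hB
  have hAX : A * Y = Y * (-B) := by
    rw [Matrix.mul_neg, eq_neg_iff_add_eq_zero]
    exact h
  have haeval : ∀ q : ℂ[X], (aeval A q) * Y = Y * aeval (-B) q := by
    intro q
    induction q using Polynomial.induction_on' with
    | add p r hp hr => rw [map_add, map_add, add_mul, mul_add, hp, hr]
    | monomial k c =>
      rw [aeval_monomial, aeval_monomial]
      have hpow : ∀ m : ℕ, A ^ m * Y = Y * (-B) ^ m := by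
        intro m
        induction m with
        | zero => simp
        | succ k ih =>
          rw [pow_succ, pow_succ, ← mul_assoc, mul_assoc _ A Y, hAX, ← mul_assoc, ih, mul_assoc]
      rw [mul_assoc, hpow, ← mul_assoc, ← mul_assoc]
      congr 1
      rw [Algebra.algebraMap_eq_smul_one]
      rw [smul_mul_assoc, mul_smul_comm, one_mul, mul_one]
  have h0 : aeval A ((-B).charpoly) * Y = 0 := by
    rw [haeval, Matrix.aeval_self_charpoly, mul_zero]
  have hroots : ∀ z ∈ (-B).charpoly.roots, IsUnit (A - algebraMap ℂ (Matrix n n ℂ) z) := by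
    intro z hz
    have hzr : (-B).charpoly.IsRoot z := (Polynomial.mem_roots (Matrix.charpoly_monic _).ne_zero).mp hz
    have hzB : z ∈ spectrum ℂ (-B) := root_charpoly_mem_spectrum hzr
    -- z ∈ σ(-B)  ⇒  -z ∈ σ(B) = σ(Aᵀ) ⊆ σ... get Re z > 0
    have hnz : -z ∈ spectrum ℂ B := by
      rw [← spectrum.neg_eq] at hzB
      simpa using hzB
    have hnzA : -z ∈ spectrum ℂ A := by
      have := transpose_mem_spectrum hnz
      rwa [hB, Matrix.transpose_transpose] at this
    have hrez : (-z).re < 0 := hM _ hnzA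
    by_contra hu
    have : z ∈ spectrum ℂ A := by
      rw [spectrum.mem_iff]
      intro hu2
      apply hu
      rw [← neg_sub]
      exact hu2.neg
    have := hM _ this
    simp only [Complex.neg_re] at hrez
    linarith
  have hunit : IsUnit (aeval A ((-B).charpoly)) := by
    have hfac := (IsAlgClosed.splits ((-B).charpoly)).eq_prod_roots_of_monic
      (Matrix.charpoly_monic (-B))
    set l : List ℂ := ((-B).charpoly.roots).toList with hl
    have hcoe : ((-B).charpoly.roots) = (l : Multiset ℂ) := (Multiset.coe_toList _).symm
    have hfac' : (-B).charpoly = (l.map (fun a => (X : ℂ[X]) - C a)).prod := by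
      rw [hfac, hcoe]
      simp
    rw [hfac']
    have := map_list_prod (aeval A) (l.map (fun a => (X : ℂ[X]) - C a))
    rw [this, List.map_map]
    apply List.prod_isUnit
    intro m hm
    obtain ⟨z, hz, rfl⟩ := List.mem_map.mp hm
    have heval : ((aeval A) ∘ fun a => (X : ℂ[X]) - C a) z
        = A - algebraMap ℂ (Matrix n n ℂ) z := by
      simp [aeval_C]
    rw [heval]
    apply hroots
    rw [hcoe]
    exact_mod_cast hz
  obtain ⟨u, hu⟩ := hunit
  have : Y = 0 := by
    have h1 : (↑u⁻¹ : Matrix n n ℂ) * (aeval A ((-B).charpoly) * Y) = Y := by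
      rw [← mul_assoc, ← hu, Units.inv_mul, one_mul]
    rw [h0, mul_zero] at h1
    exact h1.symm
  exact this

lemma sylvester_inj_r {M : Matrix n n ℝ} (hM : IsStableMat M) {S : Matrix n n ℝ}
    (h : M * S + S * Mᵀ = 0) : S = 0 := by
  apply cpx_eq_zero
  apply sylvester_inj_c hM
  rw [← cpx_transpose, ← cpx_mul, ← cpx_mul, ← cpx_add, h, cpx_zero]

lemma isHermitian_of_transpose {A : Matrix n n ℝ} (h : Aᵀ = A) : A.IsHermitian := h

lemma posSemidef_of_quad {A : Matrix n n ℝ} (hh : Aᵀ = A)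
    (h2 : ∀ x : n → ℝ, 0 ≤ x ⬝ᵥ (A *ᵥ x)) : A.PosSemidef :=
  .of_dotProduct_mulVec_nonneg (isHermitian_of_transpose hh) fun x => by simpa using h2 x

lemma pd_of_psd_inj {A : Matrix n n ℝ} (h : A.PosSemidef)
    (hinj : ∀ x : n → ℝ, A *ᵥ x = 0 → x = 0) : A.PosDef := by
  refine .of_dotProduct_mulVec_pos h.1 (fun x hx => ?_)
  refine lt_of_le_of_ne (h.dotProduct_mulVec_nonneg x) (Ne.symm fun h0 => ?_)
  exact hx (hinj x ((h.dotProduct_mulVec_zero_iff x).mp h0))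

lemma posDef_smul {A : Matrix n n ℝ} (hA : A.PosDef) {c : ℝ} (hc : 0 < c) :
    (c • A).PosDef := by
  refine .of_dotProduct_mulVec_pos ?_ (fun x hx => ?_)
  · have h1 := hA.1
    unfold Matrix.IsHermitian at h1 ⊢
    rw [conjTranspose_smul, h1]
    simp
  · have := hA.dotProduct_mulVec_pos hx
    rw [Matrix.smul_mulVec, dotProduct_smul]
    exact mul_pos hc (by simpa using this)

lemma quad_continuous (A : Matrix n n ℝ) :
    Continuous fun v : n → ℝ => v ⬝ᵥ (A *ᵥ v) := by
  unfold dotProduct Matrix.mulVec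
  apply continuous_finset_sum
  intro i _
  apply Continuous.mul (continuous_apply i)
  apply continuous_finset_sum
  intro j _
  exact (continuous_const).mul (continuous_apply j)

lemma abs_le_one_of_sphere {v : n → ℝ} (hv : v ⬝ᵥ v = 1) (i : n) : |v i| ≤ 1 := by
  have h1 : v i * v i ≤ 1 := by
    rw [← hv]
    unfold dotProduct
    exact Finset.single_le_sum (f := fun j => v j * v j)
      (fun j _ => mul_self_nonneg (v j)) (Finset.mem_univ i)
  nlinarith [abs_nonneg (v i), sq_abs (v i)]

lemma sphere_compact : IsCompact {v : n → ℝ | v ⬝ᵥ v = 1} := by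
  apply Metric.isCompact_of_isClosed_isBounded
  · exact isClosed_eq (by
      unfold dotProduct
      exact continuous_finset_sum _ fun i _ => (continuous_apply i).mul (continuous_apply i))
      continuous_const
  · apply Bornology.IsBounded.subset (Metric.isBounded_closedBall (x := (0 : n → ℝ)) (r := 1))
    intro v hv
    rw [Metric.mem_closedBall]
    rw [dist_pi_le_iff (by norm_num : (0:ℝ) ≤ 1)]
    intro i
    rw [Real.dist_eq]
    simpa using abs_le_one_of_sphere hv i

lemma posDef_of_sphere {A : Matrix n n ℝ} (hh : Aᵀ = A)
    (h : ∀ v : n → ℝ, v ⬝ᵥ v = 1 → 0 < v ⬝ᵥ (A *ᵥ v)) : A.PosDef := by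
  refine .of_dotProduct_mulVec_pos (isHermitian_of_transpose hh) (fun x hx => ?_)
  rw [show star x = x from rfl]
  have hxx : 0 < x ⬝ᵥ x := by
    rcases lt_or_eq_of_le (Finset.sum_nonneg fun i _ => mul_self_nonneg (x i)) with h' | h'
    · exact h'
    · exact absurd (dotProduct_self_eq_zero.mp h'.symm) hx
  set r : ℝ := Real.sqrt (x ⬝ᵥ x) with hr
  have hrpos : 0 < r := Real.sqrt_pos.mpr hxx
  have hr2 : r * r = x ⬝ᵥ x := Real.mul_self_sqrt hxx.le
  set v : n → ℝ := r⁻¹ • x with hv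
  have hv1 : v ⬝ᵥ v = 1 := by
    rw [hv, smul_dotProduct, dotProduct_smul, smul_eq_mul, smul_eq_mul, ← hr2]
    field_simp
  have := h v hv1
  rw [hv, Matrix.mulVec_smul, smul_dotProduct, dotProduct_smul, smul_eq_mul, smul_eq_mul] at this
  have hpos : 0 < (r⁻¹ * r⁻¹) * (x ⬝ᵥ (A *ᵥ x)) := by
    rw [mul_assoc]
    exact this
  have hrr : 0 < r⁻¹ * r⁻¹ := by positivity
  rcases mul_pos_iff.mp hpos with ⟨h1, h2⟩ | ⟨h1, h2⟩
  · exact h2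
  · linarith

lemma quad_perturb_bound {Δ : Matrix n n ℝ} {v : n → ℝ} (hv : ∀ i, |v i| ≤ 1) :
    |v ⬝ᵥ (Δ *ᵥ v)| ≤ ∑ i : n, ∑ j : n, |Δ i j| := by
  unfold dotProduct Matrix.mulVec
  calc |∑ i, v i * ∑ j, Δ i j * v j| ≤ ∑ i, |v i * ∑ j, Δ i j * v j| := by
        exact Finset.abs_sum_le_sum_abs _ _
   _ ≤ ∑ i : n, ∑ j : n, |Δ i j| := by
        apply Finset.sum_le_sum
        intro i _
        rw [abs_mul]
        calc |v i| * |∑ j, Δ i j * v j| ≤ 1 * |∑ j, Δ i j * v j| := by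
              apply mul_le_mul_of_nonneg_right (hv i) (abs_nonneg _)
          _ = |∑ j, Δ i j * v j| := one_mul _
          _ ≤ ∑ j, |Δ i j * v j| := Finset.abs_sum_le_sum_abs _ _
          _ ≤ ∑ j, |Δ i j| := by
              apply Finset.sum_le_sum
              intro j _
              rw [abs_mul]
              calc |Δ i j| * |v j| ≤ |Δ i j| * 1 :=
                    mul_le_mul_of_nonneg_left (hv j) (abs_nonneg _)
                _ = |Δ i j| := mul_one _

/-- Eventual positive definiteness along a filter from entrywise convergence. -/

lemma eventually_posDef [Nonempty n] {A₀ : Matrix n n ℝ} (hA₀ : A₀.PosDef)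
    {F : ℝ → Matrix n n ℝ} {l : Filter ℝ}
    (hF : ∀ i j, Filter.Tendsto (fun t => F t i j) l (nhds (A₀ i j)))
    (hherm : ∀ᶠ t in l, (F t)ᵀ = F t) :
    ∀ᶠ t in l, (F t).PosDef := by
  -- minimum of quadratic form on sphere
  set K : Set (n → ℝ) := {v : n → ℝ | v ⬝ᵥ v = 1} with hK
  have hKne : K.Nonempty := by
    inhabit n
    refine ⟨Pi.single default 1, ?_⟩
    simp [hK, dotProduct, Pi.single_apply]
  obtain ⟨v₀, hv₀K, hv₀min⟩ := sphere_compact.exists_isMinOn hKne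
    ((quad_continuous A₀).continuousOn)
  set m : ℝ := v₀ ⬝ᵥ (A₀ *ᵥ v₀) with hm
  have hmpos : 0 < m := hA₀.dotProduct_mulVec_pos (x := v₀) (fun h0 => by simp [hK, h0] at hv₀K)
  set N : ℕ := Fintype.card n with hN
  set ε : ℝ := m / (N ^ 2 + 1) with hε
  have hεpos : 0 < ε := by
    apply div_pos hmpos
    positivity
  have hev : ∀ᶠ t in l, ∀ i j, |F t i j - A₀ i j| < ε := by
    rw [Filter.eventually_all]
    intro i
    rw [Filter.eventually_all]
    intro j
    have := (hF i j).eventually (Metric.ball_mem_nhds (A₀ i j) hεpos)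
    apply this.mono
    intro t ht
    simpa [Real.dist_eq] using ht
  filter_upwards [hev, hherm] with t ht hsym
  apply posDef_of_sphere hsym
  intro v hv1
  have hbd := quad_perturb_bound (Δ := F t - A₀) (abs_le_one_of_sphere hv1)
  have hsum : (∑ i : n, ∑ j : n, |(F t - A₀) i j|) < (N:ℝ) ^ 2 * ε := by
    calc (∑ i : n, ∑ j : n, |(F t - A₀) i j|) < ∑ i : n, ∑ j : n, ε := by
          apply Finset.sum_lt_sum_of_nonempty Finset.univ_nonempty
          intro i _
          apply Finset.sum_lt_sum_of_nonempty Finset.univ_nonempty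
          intro j _
          simpa [Matrix.sub_apply] using ht i j
      _ = (N:ℝ) ^ 2 * ε := by
          rw [Finset.sum_const, Finset.sum_const, Finset.card_univ, ← hN]
          simp [nsmul_eq_mul]
          ring
  have hdecomp : v ⬝ᵥ (F t *ᵥ v) = v ⬝ᵥ (A₀ *ᵥ v) + v ⬝ᵥ ((F t - A₀) *ᵥ v) := by
    rw [Matrix.sub_mulVec, dotProduct_sub]
    ring
  have hmin : m ≤ v ⬝ᵥ (A₀ *ᵥ v) := hv₀min hv1
  have hmε : m = ((N:ℝ) ^ 2 + 1) * ε := by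
    rw [hε]
    field_simp
  have h3 : -((N:ℝ) ^ 2 * ε) < v ⬝ᵥ ((F t - A₀) *ᵥ v) := by
    have hna := neg_abs_le (v ⬝ᵥ ((F t - A₀) *ᵥ v))
    linarith
  rw [hdecomp]
  linarith

noncomputable def Mth (M : Matrix n n ℝ) (t : ℝ) : Matrix n n ℝ := t • M - (1 - t) • 1

def vec (A : Matrix n n ℝ) : n × n → ℝ := fun q => A q.1 q.2

noncomputable def Lop (M : Matrix n n ℝ) (t : ℝ) : Matrix (n × n) (n × n) ℝ :=
  Matrix.of fun q r => Mth M t q.1 r.1 * (if q.2 = r.2 then 1 else 0)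
    + (if q.1 = r.1 then 1 else 0) * Mth M t q.2 r.2

lemma vec_inj {A B : Matrix n n ℝ} (h : vec A = vec B) : A = B := by
  ext i j; exact congrFun h (i, j)

lemma Lop_mulVec (M : Matrix n n ℝ) (t : ℝ) (A : Matrix n n ℝ) :
    Lop M t *ᵥ vec A = vec (Mth M t * A + A * (Mth M t)ᵀ) := by
  funext q
  obtain ⟨i, j⟩ := q
  show ∑ r : n × n, Lop M t (i,j) r * vec A r = _
  rw [Fintype.sum_prod_type]
  have key : ∀ k l : n, Lop M t (i,j) (k,l) * vec A (k,l)
      = (if j = l then Mth M t i k * A k j else 0)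
        + (if i = k then Mth M t j l * A i l else 0) := by
    intro k l
    show (Mth M t i k * (if j = l then 1 else 0) + (if i = k then 1 else 0) * Mth M t j l) * A k l = _
    by_cases h1 : j = l <;> by_cases h2 : i = k <;> simp only [h1, h2, if_true, if_false] <;> subst_eqs <;> ring
  simp only [key]
  have hsplit : ∀ k : n, (∑ l : n, ((if j = l then Mth M t i k * A k j else 0) + (if i = k then Mth M t j l * A i l else 0))) = Mth M t i k * A k j + (if i = k then (∑ l : n, Mth M t j l * A i l) else 0) := by
    intro k
    rw [Finset.sum_add_distrib]
    congr 1
    · rw [Finset.sum_ite_eq]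
      simp
    · split <;> simp
  simp only [hsplit]
  rw [Finset.sum_add_distrib, Finset.sum_ite_eq]
  simp only [Finset.mem_univ, if_true]
  show _ = (Mth M t * A) i j + (A * (Mth M t)ᵀ) i j
  rw [Matrix.mul_apply, Matrix.mul_apply]
  congr 1
  apply Finset.sum_congr rfl
  intro l _
  rw [Matrix.transpose_apply]
  ring

lemma lyap_solution_posDef [Nonempty n] {M C S : Matrix n n ℝ} (hM : IsStableMat M)
    (hC : C.PosDef) (hCsym : Cᵀ = C) (hSeq : M * S + S * Mᵀ + C = 0) : S.PosDef := by
  have hstab : ∀ t ∈ Icc (0:ℝ) 1, IsStableMat (Mth M t) := fun t ht =>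
    stable_homotopy hM ht.1 ht.2
  have hLinj : ∀ t ∈ Icc (0:ℝ) 1, Function.Injective ((Lop M t).mulVec) := by
    intro t ht x y hxy
    have hz : Lop M t *ᵥ (x - y) = 0 := by rw [Matrix.mulVec_sub, hxy, sub_self]
    set A : Matrix n n ℝ := Matrix.of fun i j => (x - y) (i, j) with hA
    have hvA : vec A = x - y := rfl
    rw [← hvA, Lop_mulVec] at hz
    have h0 : Mth M t * A + A * (Mth M t)ᵀ = 0 := by
      apply vec_inj
      rw [hz]
      rfl
    have hA0 := sylvester_inj_r (hstab t ht) h0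
    have hxy0 : x - y = 0 := by
      rw [← hvA, hA0]
      rfl
    exact sub_eq_zero.mp hxy0
  have hUnit : ∀ t ∈ Icc (0:ℝ) 1, IsUnit (Lop M t) := fun t ht =>
    Matrix.mulVec_injective_iff_isUnit.mp (hLinj t ht)
  have hdet : ∀ t ∈ Icc (0:ℝ) 1, (Lop M t).det ≠ 0 := fun t ht =>
    ((Matrix.isUnit_iff_isUnit_det _).mp (hUnit t ht)).ne_zero
  set W : n × n → ℝ := vec (-C) with hW
  set Sv : ℝ → (n × n → ℝ) := fun t => ((Lop M t).det)⁻¹ • ((Lop M t).adjugate *ᵥ W) with hSv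
  set Sm : ℝ → Matrix n n ℝ := fun t => Matrix.of fun i j => Sv t (i, j) with hSm
  have hvecSm : ∀ t, vec (Sm t) = Sv t := fun t => rfl
  have hsolveV : ∀ t ∈ Icc (0:ℝ) 1, Lop M t *ᵥ Sv t = W := by
    intro t ht
    rw [hSv]
    simp only
    rw [Matrix.mulVec_smul, Matrix.mulVec_mulVec, Matrix.mul_adjugate,
      Matrix.smul_mulVec, Matrix.one_mulVec, smul_smul,
      inv_mul_cancel₀ (hdet t ht), one_smul]
  have hsolve : ∀ t ∈ Icc (0:ℝ) 1, Mth M t * Sm t + Sm t * (Mth M t)ᵀ + C = 0 := by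
    intro t ht
    have h1 : vec (Mth M t * Sm t + Sm t * (Mth M t)ᵀ) = vec (-C) := by
      rw [← Lop_mulVec, hvecSm, hsolveV t ht]
    have h2 := vec_inj h1
    rw [h2]
    simp
  have huniq : ∀ t ∈ Icc (0:ℝ) 1, ∀ A : Matrix n n ℝ,
      Mth M t * A + A * (Mth M t)ᵀ + C = 0 → A = Sm t := by
    intro t ht A hA
    have hzero : Mth M t * (A - Sm t) + (A - Sm t) * (Mth M t)ᵀ = 0 := by
      have h2 := hsolve t ht
      have h3 : Mth M t * (A - Sm t) + (A - Sm t) * (Mth M t)ᵀ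
          = (Mth M t * A + A * (Mth M t)ᵀ + C) - (Mth M t * Sm t + Sm t * (Mth M t)ᵀ + C) := by
        noncomm_ring
      rw [h3, hA, h2, sub_self]
    exact sub_eq_zero.mp (sylvester_inj_r (hstab t ht) hzero)
  have hsym : ∀ t ∈ Icc (0:ℝ) 1, (Sm t)ᵀ = Sm t := by
    intro t ht
    have h2 := hsolve t ht
    have h3 : Mth M t * (Sm t)ᵀ + (Sm t)ᵀ * (Mth M t)ᵀ + C = 0 := by
      have h4 := congrArg Matrix.transpose h2
      rw [Matrix.transpose_add, Matrix.transpose_add, Matrix.transpose_mul, Matrix.transpose_mul,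
        Matrix.transpose_transpose, Matrix.transpose_zero, hCsym] at h4
      rw [show Mth M t * (Sm t)ᵀ + (Sm t)ᵀ * (Mth M t)ᵀ
        = (Sm t)ᵀ * (Mth M t)ᵀ + Mth M t * (Sm t)ᵀ from add_comm _ _]
      exact h4
    exact huniq t ht _ h3
  -- continuity
  have hMthc : ∀ a b : n, Continuous fun t => Mth M t a b := by
    intro a b
    simp only [Mth, Matrix.sub_apply, Matrix.smul_apply, smul_eq_mul]
    fun_prop
  have hLcont : Continuous (Lop M) := by
    apply continuous_matrix
    intro q r
    simp only [Lop, Matrix.of_apply]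
    exact ((hMthc q.1 r.1).mul continuous_const).add (continuous_const.mul (hMthc q.2 r.2))
  have hdetc : Continuous fun t => (Lop M t).det := hLcont.matrix_det
  have hadjc : Continuous fun t => (Lop M t).adjugate := hLcont.matrix_adjugate
  have hSvc : ∀ q : n × n, ContinuousOn (fun t => Sv t q) (Icc (0:ℝ) 1) := by
    intro q
    have h1 : ContinuousOn (fun t => ((Lop M t).det)⁻¹) (Icc (0:ℝ) 1) :=
      (hdetc.continuousOn).inv₀ hdet
    have h2 : Continuous fun t => ∑ r : n × n, (Lop M t).adjugate q r * W r :=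
      continuous_finset_sum _ (fun r _ => (hadjc.matrix_elem q r).mul continuous_const)
    have h3 : (fun t => Sv t q)
        = fun t => ((Lop M t).det)⁻¹ * ∑ r : n × n, (Lop M t).adjugate q r * W r := rfl
    rw [h3]
    exact h1.mul h2.continuousOn
  have hquadc : ∀ x : n → ℝ, ContinuousOn (fun t => x ⬝ᵥ (Sm t *ᵥ x)) (Icc (0:ℝ) 1) := by
    intro x
    have h3 : (fun t => x ⬝ᵥ (Sm t *ᵥ x))
        = fun t => ∑ i : n, x i * ∑ j : n, Sv t (i, j) * x j := rfl
    rw [h3]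
    apply continuousOn_finset_sum
    intro i _
    apply ContinuousOn.mul continuousOn_const
    apply continuousOn_finset_sum
    intro j _
    exact (hSvc (i, j)).mul continuousOn_const
  -- endpoints
  have hMth1 : Mth M 1 = M := by
    simp [Mth]
  have hS1 : S = Sm 1 := by
    apply huniq 1 (by constructor <;> norm_num) S
    rw [hMth1]
    exact hSeq
  have hMth0 : Mth M 0 = -1 := by
    simp [Mth]
  have hS0 : ((2⁻¹ : ℝ) • C) = Sm 0 := by
    apply huniq 0 (by constructor <;> norm_num)
    rw [hMth0]
    rw [Matrix.transpose_neg, Matrix.transpose_one]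
    rw [neg_one_mul, mul_neg_one]
    module
  have hS0pd : (Sm 0).PosDef := by
    rw [← hS0]
    exact posDef_smul hC (by norm_num)
  -- invertibility of Sm t for t ∈ Icc
  have hSminj : ∀ t ∈ Icc (0:ℝ) 1, ∀ x : n → ℝ, Sm t *ᵥ x = 0 → x = 0 := by
    intro t ht x hx
    have h2 := hsolve t ht
    have h5 : x ⬝ᵥ ((Mth M t * Sm t + Sm t * (Mth M t)ᵀ + C) *ᵥ x) = 0 := by
      rw [h2]
      simp
    have hterm1 : x ⬝ᵥ ((Mth M t * Sm t) *ᵥ x) = 0 := by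
      rw [← Matrix.mulVec_mulVec, hx]
      simp
    have hterm2 : x ⬝ᵥ ((Sm t * (Mth M t)ᵀ) *ᵥ x) = 0 := by
      rw [dotProduct_mulVec, ← Matrix.vecMul_vecMul]
      have h6 : x ᵥ* Sm t = 0 := by
        rw [← hsym t ht, Matrix.vecMul_transpose, hx]
      rw [h6]
      simp
    rw [Matrix.add_mulVec, Matrix.add_mulVec, dotProduct_add, dotProduct_add,
      hterm1, hterm2, zero_add, zero_add] at h5
    by_contra hxne
    have := hC.dotProduct_mulVec_pos hxne
    rw [show star x = x from rfl] at this
    rw [h5] at this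
    exact lt_irrefl 0 this
  -- the connectedness / infimum argument
  by_contra hnot
  set Bs : Set ℝ := {t | t ∈ Icc (0:ℝ) 1 ∧ ¬ (Sm t).PosDef} with hBs
  have h1B : (1:ℝ) ∈ Bs := ⟨⟨by norm_num, le_refl 1⟩, by rwa [← hS1]⟩
  have hBne : Bs.Nonempty := ⟨1, h1B⟩
  have hBbdd : BddBelow Bs := ⟨0, fun b hb => hb.1.1⟩
  set τ : ℝ := sInf Bs with hτ
  have hτ0 : 0 ≤ τ := le_csInf hBne (fun b hb => hb.1.1)
  have hτ1 : τ ≤ 1 := csInf_le hBbdd h1B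
  have hτIcc : τ ∈ Icc (0:ℝ) 1 := ⟨hτ0, hτ1⟩
  by_cases hPDτ : (Sm τ).PosDef
  · -- openness contradiction
    have hev : ∀ᶠ t in nhdsWithin τ (Icc (0:ℝ) 1), (Sm t).PosDef := by
      apply eventually_posDef hPDτ
      · intro i j
        have := (hSvc (i, j)) τ hτIcc
        exact this
      · exact (eventually_mem_nhdsWithin).mono (fun t ht => hsym t ht)
    rw [Filter.Eventually, Metric.mem_nhdsWithin_iff] at hev
    obtain ⟨δ, hδ, hball⟩ := hev
    obtain ⟨b, hbB, hbδ⟩ := (csInf_lt_iff hBbdd hBne).mp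
      (show sInf Bs < τ + δ by rw [← hτ]; linarith)
    have hτb : τ ≤ b := csInf_le hBbdd hbB
    have hbmem : b ∈ Metric.ball τ δ ∩ Icc (0:ℝ) 1 := by
      constructor
      · rw [Metric.mem_ball, Real.dist_eq, abs_lt]
        constructor <;> linarith
      · exact hbB.1
    exact hbB.2 (hball hbmem)
  · -- closedness contradiction
    have hτpos : 0 < τ := by
      rcases lt_or_eq_of_le hτ0 with h | h
      · exact h
      · exact absurd (h ▸ hS0pd) hPDτ
    have hIco : ∀ t ∈ Ico (0:ℝ) τ, (Sm t).PosDef := by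
      intro t ht
      by_contra hntd
      have : t ∈ Bs := ⟨⟨ht.1, le_trans ht.2.le hτ1⟩, hntd⟩
      have := csInf_le hBbdd this
      rw [← hτ] at this
      linarith [ht.2]
    have hNeBot : (nhdsWithin τ (Ico (0:ℝ) τ)).NeBot := by
      rw [← mem_closure_iff_nhdsWithin_neBot, closure_Ico (ne_of_lt hτpos)]
      exact ⟨hτ0, le_refl τ⟩
    have hpsd : (Sm τ).PosSemidef := by
      apply posSemidef_of_quad (hsym τ hτIcc)
      intro x
      have htd : Filter.Tendsto (fun t => x ⬝ᵥ (Sm t *ᵥ x)) (nhdsWithin τ (Ico (0:ℝ) τ))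
          (nhds (x ⬝ᵥ (Sm τ *ᵥ x))) := by
        apply ((hquadc x) τ hτIcc).mono
        intro t ht
        exact ⟨ht.1, le_trans ht.2.le hτ1⟩
      apply ge_of_tendsto htd
      apply (eventually_mem_nhdsWithin).mono
      intro t ht
      by_cases hx0 : x = 0
      · simp [hx0]
      · have := (hIco t ht).dotProduct_mulVec_pos hx0
        rw [show star x = x from rfl] at this
        exact this.le
    exact hPDτ (pd_of_psd_inj hpsd (hSminj τ hτIcc))

lemma lyap_exists {M : Matrix n n ℝ} (hM : IsStableMat M) (C : Matrix n n ℝ)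
    (hCsym : Cᵀ = C) :
    ∃ S : Matrix n n ℝ, Sᵀ = S ∧ M * S + S * Mᵀ + C = 0 := by
  set L : Matrix n n ℝ →ₗ[ℝ] Matrix n n ℝ :=
    { toFun := fun A => M * A + A * Mᵀ
      map_add' := by intros; noncomm_ring
      map_smul' := by intros; simp [smul_mul_assoc, mul_smul_comm, smul_add] } with hL
  have hinj : Function.Injective L := by
    intro a b hab
    have h0 : L (a - b) = 0 := by rw [map_sub, hab, sub_self]
    have : M * (a - b) + (a - b) * Mᵀ = 0 := h0
    exact sub_eq_zero.mp (sylvester_inj_r hM this)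
  obtain ⟨S, hS⟩ := (LinearMap.injective_iff_surjective).mp hinj (-C)
  have hS' : M * S + S * Mᵀ = -C := hS
  refine ⟨S, ?_, by rw [hS']; simp⟩
  have h2 : L Sᵀ = -C := by
    show M * Sᵀ + Sᵀ * Mᵀ = -C
    have h3 := congrArg Matrix.transpose hS'
    rw [Matrix.transpose_add, Matrix.transpose_mul, Matrix.transpose_mul,
      Matrix.transpose_transpose, Matrix.transpose_neg, hCsym] at h3
    rw [show M * Sᵀ + Sᵀ * Mᵀ = Sᵀ * Mᵀ + M * Sᵀ from add_comm _ _]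
    exact h3
  exact hinj (h2.trans hS.symm)

/-- Counting: `|{(i,j) : i ≤ j}| = p(p+1)/2`. -/

lemma card_pairs (p : ℕ) :
    Fintype.card {q : Fin p × Fin p // q.1 ≤ q.2} = p * (p + 1) / 2 := by
  classical
  rw [Fintype.card_subtype]
  set A : Finset (Fin p × Fin p) := Finset.univ.filter (fun q => q.1 ≤ q.2) with hA
  set B : Finset (Fin p × Fin p) := Finset.univ.filter (fun q => q.2 ≤ q.1) with hB
  have hunion : A ∪ B = Finset.univ := by
    ext q
    simp only [Finset.mem_union, hA, hB, Finset.mem_filter, Finset.mem_univ, true_and]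
    exact iff_of_true (le_total q.1 q.2) trivial
  have hinter : A ∩ B = Finset.univ.filter (fun q => q.1 = q.2) := by
    ext q
    simp only [Finset.mem_inter, hA, hB, Finset.mem_filter, Finset.mem_univ, true_and]
    constructor
    · rintro ⟨h1, h2⟩; exact le_antisymm h1 h2
    · rintro h; exact ⟨le_of_eq h, le_of_eq h.symm⟩
  have hdiag : (Finset.univ.filter (fun q : Fin p × Fin p => q.1 = q.2)).card = p := by
    have himg : Finset.univ.filter (fun q : Fin p × Fin p => q.1 = q.2)
        = Finset.univ.image (fun i : Fin p => (i, i)) := by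
      ext q
      simp only [Finset.mem_filter, Finset.mem_univ, true_and, Finset.mem_image]
      constructor
      · intro h
        obtain ⟨a, b⟩ := q
        dsimp at h
        subst h
        exact ⟨a, rfl⟩
      · rintro ⟨i, _, rfl⟩; rfl
    rw [himg, Finset.card_image_of_injective _ (fun a b hab => (Prod.ext_iff.mp hab).1),
      Finset.card_univ, Fintype.card_fin]
  have hcardAB : A.card = B.card := by
    apply Finset.card_nbij' (fun q => (q.2, q.1)) (fun q => (q.2, q.1)) <;>
      simp [hA, hB, Set.MapsTo, Set.LeftInvOn, Set.RightInvOn]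
  have hsum := Finset.card_union_add_card_inter A B
  rw [hunion, hinter, hdiag, Finset.card_univ, Fintype.card_prod, Fintype.card_fin] at hsum
  have hmul : p * (p + 1) = p * p + p := by ring
  have hAcard : A.card = p * (p + 1) / 2 := by omega
  rw [hA] at hAcard
  simpa [Finset.filter_congr_decidable] using hAcard

end LyapAux

open LyapAux in
/-- if the graph has more than `p(p+1)/2` edges, then the model is
non-identifiable: every fiber is infinite. -/
theorem too_many_edges_non_identifiable {p : ℕ}
    (E : Finset (Fin p × Fin p)) (hloops : ∀ i : Fin p, (i, i) ∈ E)
    (hcard : E.card > p * (p + 1) / 2)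
    (C : Matrix (Fin p) (Fin p) ℝ) (hC : C.PosDef) :
    ∀ M₀ : Matrix (Fin p) (Fin p) ℝ,
      InSupp (E : Set (Fin p × Fin p)) M₀ → IsStableMat M₀ →
      (Fiber (E : Set (Fin p × Fin p)) C M₀).Infinite := by
  intro M₀ hsupp hstab
  -- p ≥ 1
  obtain ⟨e₀, he₀⟩ := Finset.card_pos.mp (lt_of_le_of_lt (Nat.zero_le _) hcard)
  haveI : Nonempty (Fin p) := ⟨e₀.1⟩
  have hCsym : Cᵀ = C := hC.1
  -- the positive definite solution for M₀
  obtain ⟨S, hSsym, hSeq⟩ := lyap_exists hstab C hCsym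
  have hSpd : S.PosDef := lyap_solution_posDef hstab hC hCsym hSeq
  -- linear maps
  classical
  let em : (E → ℝ) →ₗ[ℝ] Matrix (Fin p) (Fin p) ℝ :=
    { toFun := edgeMatrix E
      map_add' := by
        intro f g
        ext j i
        unfold edgeMatrix
        show (if h : (i, j) ∈ E then (f + g) ⟨(i, j), h⟩ else 0)
          = (if h : (i, j) ∈ E then f ⟨(i, j), h⟩ else 0) + (if h : (i, j) ∈ E then g ⟨(i, j), h⟩ else 0)
        by_cases h : (i, j) ∈ E <;> simp [h, Matrix.add_apply, Pi.add_apply]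
      map_smul' := by
        intro c f
        ext j i
        unfold edgeMatrix
        show (if h : (i, j) ∈ E then (c • f) ⟨(i, j), h⟩ else 0)
          = c • (if h : (i, j) ∈ E then f ⟨(i, j), h⟩ else 0)
        by_cases h : (i, j) ∈ E <;> simp [h, Matrix.smul_apply, Pi.smul_apply] }
  let lyapOp : Matrix (Fin p) (Fin p) ℝ →ₗ[ℝ] Matrix (Fin p) (Fin p) ℝ :=
    { toFun := fun A => A * S + S * Aᵀ
      map_add' := by
        intro a b
        show (a + b) * S + S * (a + b)ᵀ = _
        rw [Matrix.transpose_add]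
        noncomm_ring
      map_smul' := by
        intro c a
        show (c • a) * S + S * (c • a)ᵀ = _
        rw [Matrix.transpose_smul]
        simp [smul_mul_assoc, mul_smul_comm, smul_add] }
  let proj : Matrix (Fin p) (Fin p) ℝ →ₗ[ℝ] ({q : Fin p × Fin p // q.1 ≤ q.2} → ℝ) :=
    { toFun := fun A q => A q.1.1 q.1.2
      map_add' := by intro a b; funext q; simp [Matrix.add_apply]
      map_smul' := by intro c a; funext q; simp [Matrix.smul_apply] }
  let Φ : (E → ℝ) →ₗ[ℝ] ({q : Fin p × Fin p // q.1 ≤ q.2} → ℝ) :=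
    proj.comp (lyapOp.comp em)
  -- Φ is not injective by dimension count
  have hnotinj : ¬ Function.Injective Φ := by
    intro hinj
    have hle := LinearMap.finrank_le_finrank_of_injective hinj
    rw [Module.finrank_fintype_fun_eq_card, Module.finrank_fintype_fun_eq_card,
      Fintype.card_coe, card_pairs p] at hle
    omega
  -- get a nonzero kernel element
  have hker : ∃ f : E → ℝ, f ≠ 0 ∧ Φ f = 0 := by
    rw [Function.not_injective_iff] at hnotinj
    obtain ⟨a, b, hab, hne⟩ := hnotinj
    exact ⟨a - b, sub_ne_zero.mpr hne, by rw [map_sub, hab, sub_self]⟩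
  obtain ⟨f, hfne, hf0⟩ := hker
  set N : Matrix (Fin p) (Fin p) ℝ := edgeMatrix E f with hN
  have hNsupp : ∀ i j : Fin p, (i, j) ∉ E → N j i = 0 := by
    intro i j h
    rw [hN]
    unfold edgeMatrix
    rw [dif_neg h]
  have hNne : N ≠ 0 := by
    intro h0
    apply hfne
    funext e
    have h1 : N e.1.2 e.1.1 = f e := by
      rw [hN]
      unfold edgeMatrix
      rw [dif_pos e.2]
    rw [h0] at h1
    simp only [Matrix.zero_apply] at h1
    show f e = 0
    exact h1.symm
  -- K = N S + S Nᵀ = 0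
  set K : Matrix (Fin p) (Fin p) ℝ := N * S + S * Nᵀ with hK
  have hKsym : ∀ a b : Fin p, K a b = K b a := by
    intro a b
    have h1 : Kᵀ = K := by
      rw [hK, Matrix.transpose_add, Matrix.transpose_mul, Matrix.transpose_mul,
        Matrix.transpose_transpose, hSsym]
      exact add_comm _ _
    calc K a b = Kᵀ b a := rfl
      _ = K b a := by rw [h1]
  have hKupper : ∀ a b : Fin p, a ≤ b → K a b = 0 := by
    intro a b hab
    have := congrFun hf0 ⟨(a, b), hab⟩
    exact this
  have hK0 : K = 0 := by
    ext a b
    rcases le_total a b with h | h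
    · rw [hKupper a b h]; rfl
    · rw [hKsym, hKupper b a h]; rfl
  -- the family M₀ + c • N
  have hmem : ∀ c : ℝ, (M₀ + c • N) ∈ Fiber (E : Set (Fin p × Fin p)) C M₀ := by
    intro c
    have heqc : (M₀ + c • N) * S + S * (M₀ + c • N)ᵀ + C = 0 := by
      rw [Matrix.transpose_add, Matrix.transpose_smul, Matrix.add_mul, Matrix.mul_add,
        smul_mul_assoc, mul_smul_comm]
      have : M₀ * S + c • (N * S) + (S * M₀ᵀ + c • (S * Nᵀ)) + C
          = (M₀ * S + S * M₀ᵀ + C) + c • (N * S + S * Nᵀ) := by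
        module
      rw [this, hSeq, ← hK, hK0]
      simp
    refine ⟨?_, ?_, S, hSpd, hSeq, heqc⟩
    · intro i j hij
      have hij' : (i, j) ∉ E := by
        intro h
        exact hij (Finset.mem_coe.mpr h)
      rw [Matrix.add_apply, hsupp i j hij, Matrix.smul_apply, hNsupp i j hij']
      simp
    · exact lyap_stable hSpd hC heqc
  have hinj : Function.Injective (fun c : ℝ => M₀ + c • N) := by
    intro c₁ c₂ h
    have h3 : c₁ • N = c₂ • N := add_left_cancel h
    have h2 : (c₁ - c₂) • N = 0 := by
      rw [sub_smul, h3, sub_self]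
    rcases smul_eq_zero.mp h2 with h4 | h4
    · exact sub_eq_zero.mp h4
    · exact absurd h4 hNne
  exact Set.infinite_of_injective_forall_mem hinj hmem
end

section
/- Let G=(V,E) be a directed graph on V=[p] containing all self-loops, and let C be a diagonal positive definite p×p matrix. If there is no trek from i to j in G (i.e., there is no node t with a directed path from t to i and a directed path from t to j along edges of E), then Σ_{ij} = 0 for every matrix Σ ∈ M_{G,C}. -/
open Matrix MeasureTheory

section Helpers

set_option linter.unusedSectionVars false

variable {n : Type*} [Fintype n] [DecidableEq n]

lemma quad_smul (M : Matrix n n ℝ) (c : ℝ) (v : n → ℝ) :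
    (c • v) ⬝ᵥ M *ᵥ (c • v) = c ^ 2 * (v ⬝ᵥ M *ᵥ v) := by
  rw [mulVec_smul, dotProduct_smul, smul_dotProduct]
  simp [smul_eq_mul]; ring

lemma dot_flip (M : Matrix n n ℝ) (hM : Mᵀ = M) (u w : n → ℝ) :
    u ⬝ᵥ M *ᵥ w = w ⬝ᵥ M *ᵥ u := by
  rw [dotProduct_mulVec, ← mulVec_transpose, hM, dotProduct_comm]

lemma symm_quad_zero (Δ : Matrix n n ℝ) (hs : Δᵀ = Δ)
    (h : ∀ v : n → ℝ, v ⬝ᵥ Δ *ᵥ v = 0) : Δ = 0 := by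
  have key : ∀ u w : n → ℝ, u ⬝ᵥ Δ *ᵥ w = 0 := by
    intro u w
    have h1 := h (u + w)
    have h2 := h u
    have h3 := h w
    have hsym := dot_flip Δ hs u w
    rw [mulVec_add, dotProduct_add, add_dotProduct, add_dotProduct] at h1
    linarith
  ext a b
  have := key (Pi.single a 1) (Pi.single b 1)
  rw [single_dotProduct, mulVec_single] at this
  simpa using this

lemma herm_of_symm {M : Matrix n n ℝ} (h : Mᵀ = M) : M.IsHermitian := by
  rwa [Matrix.IsHermitian, conjTranspose_eq_transpose_of_trivial]

/-- quadratic form expansion for T + ε Δ -/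
lemma quad_add_smul (T Δ : Matrix n n ℝ) (ε : ℝ) (v : n → ℝ) :
    v ⬝ᵥ (T + ε • Δ) *ᵥ v = v ⬝ᵥ T *ᵥ v + ε * (v ⬝ᵥ Δ *ᵥ v) := by
  rw [add_mulVec, dotProduct_add, smul_mulVec, dotProduct_smul, smul_eq_mul]

/-- continuity of a quadratic form -/
lemma quad_continuous (M : Matrix n n ℝ) :
    Continuous fun v : n → ℝ => v ⬝ᵥ M *ᵥ v := by
  simp only [dotProduct, mulVec]
  exact continuous_finset_sum _ fun i _ =>
    (continuous_apply i).mul <| continuous_finset_sum _ fun j _ =>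
      continuous_const.mul (continuous_apply j)

/-- bound for quadratic form of Δ -/
lemma quad_bound (Δ : Matrix n n ℝ) (v : n → ℝ) :
    |v ⬝ᵥ Δ *ᵥ v| ≤ (∑ x, ∑ y, |Δ x y|) * ‖v‖ ^ 2 := by
  simp only [dotProduct, mulVec]
  refine le_trans (Finset.abs_sum_le_sum_abs _ _) ?_
  rw [Finset.sum_mul]
  refine Finset.sum_le_sum fun x _ => ?_
  rw [Finset.mul_sum]
  refine le_trans (Finset.abs_sum_le_sum_abs _ _) ?_
  rw [Finset.sum_mul]
  refine Finset.sum_le_sum fun y _ => ?_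
  rw [abs_mul, abs_mul]
  have h1 : |v x| ≤ ‖v‖ := by simpa [Real.norm_eq_abs] using norm_le_pi_norm v x
  have h2 : |v y| ≤ ‖v‖ := by simpa [Real.norm_eq_abs] using norm_le_pi_norm v y
  calc |v x| * (|Δ x y| * |v y|) ≤ ‖v‖ * (|Δ x y| * ‖v‖) := by
        exact mul_le_mul h1 (mul_le_mul_of_nonneg_left h2 (abs_nonneg _))
          (by positivity) (norm_nonneg v)
    _ = |Δ x y| * ‖v‖ ^ 2 := by ring

lemma lyap_no_neg (N T D Δ : Matrix n n ℝ) (hT : T.PosDef) (hD : D.PosDef)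
    (hlyap : N * T + T * Nᵀ + D = 0)
    (hΔs : Δᵀ = Δ) (hΔ : N * Δ + Δ * Nᵀ = 0)
    (v₀ : n → ℝ) (hv₀ : v₀ ⬝ᵥ Δ *ᵥ v₀ < 0) : False := by
  rcases isEmpty_or_nonempty n with he | hne
  · simp [dotProduct] at hv₀
  have hTs : Tᵀ = T := by
    have := hT.1; rwa [Matrix.IsHermitian, conjTranspose_eq_transpose_of_trivial] at this
  have hherm : ∀ ε : ℝ, ((T + ε • Δ)ᵀ = T + ε • Δ) := by
    intro ε; rw [transpose_add, transpose_smul, hTs, hΔs]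
  -- the set of admissible ε
  set A : Set ℝ := {ε | 0 ≤ ε ∧ (T + ε • Δ).PosSemidef} with hA
  have hstar : ∀ v : n → ℝ, star v = v := fun v => funext fun i => star_trivial _
  have h0A : (0 : ℝ) ∈ A := by
    refine ⟨le_refl 0, ?_⟩
    simpa using hT.posSemidef
  have hbdd : BddAbove A := by
    refine ⟨(v₀ ⬝ᵥ T *ᵥ v₀) / (-(v₀ ⬝ᵥ Δ *ᵥ v₀)), fun ε hε => ?_⟩
    have h1 : 0 ≤ v₀ ⬝ᵥ (T + ε • Δ) *ᵥ v₀ := by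
      have := hε.2.dotProduct_mulVec_nonneg v₀; rwa [hstar] at this
    rw [quad_add_smul] at h1
    rw [le_div_iff₀ (by linarith)]
    nlinarith
  have hclosed : IsClosed A := by
    have : A = {ε : ℝ | 0 ≤ ε} ∩ ⋂ v : n → ℝ, {ε | 0 ≤ v ⬝ᵥ T *ᵥ v + ε * (v ⬝ᵥ Δ *ᵥ v)} := by
      ext ε
      simp only [Set.mem_setOf_eq, Set.mem_inter_iff, Set.mem_iInter, hA]
      constructor
      · rintro ⟨h1, h2⟩
        refine ⟨h1, fun v => ?_⟩
        have := h2.dotProduct_mulVec_nonneg v; rw [hstar, quad_add_smul] at this; exact this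
      · rintro ⟨h1, h2⟩
        refine ⟨h1, .of_dotProduct_mulVec_nonneg (herm_of_symm (hherm ε)) fun v => ?_⟩
        rw [hstar, quad_add_smul]; exact h2 v
    rw [this]
    refine (isClosed_le continuous_const continuous_id).inter
      (isClosed_iInter fun v => isClosed_le continuous_const ?_)
    exact continuous_const.add (continuous_id.mul continuous_const)
  -- the supremum
  set ε₀ : ℝ := sSup A with hε₀
  have hε₀A : ε₀ ∈ A := hclosed.csSup_mem ⟨0, h0A⟩ hbdd
  set S : Matrix n n ℝ := T + ε₀ • Δ with hS
  have hSpsd : S.PosSemidef := hε₀A.2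
  have hSlyap : N * S + S * Nᵀ + D = 0 := by
    have : N * S + S * Nᵀ + D = (N * T + T * Nᵀ + D) + ε₀ • (N * Δ + Δ * Nᵀ) := by
      rw [hS, mul_add, add_mul, Matrix.mul_smul, Matrix.smul_mul, smul_add]
      abel
    rw [this, hlyap, hΔ, smul_zero, add_zero]
  -- S is positive definite
  have hSpd : S.PosDef := by
    refine .of_dotProduct_mulVec_pos hSpsd.1 fun v hv => ?_
    rw [hstar]
    rcases lt_or_eq_of_le (by simpa [hstar v] using hSpsd.dotProduct_mulVec_nonneg v) with h | h
    · exact h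
    have hSv : S *ᵥ v = 0 := (hSpsd.dotProduct_mulVec_zero_iff v).mp (by rw [hstar]; exact h.symm)
    exfalso
    have hDv : v ⬝ᵥ D *ᵥ v = 0 := by
      have hD0 : D = -(N * S) - S * Nᵀ := by
        have := hSlyap; abel_nf at this ⊢; linear_combination (norm := abel_nf) this
      rw [hD0, sub_mulVec, neg_mulVec, dotProduct_sub, dotProduct_neg,
        ← mulVec_mulVec, hSv, mulVec_zero, dotProduct_zero, ← mulVec_mulVec]
      have hSsymm : Sᵀ = S := hherm ε₀
      have : v ⬝ᵥ S *ᵥ (Nᵀ *ᵥ v) = (Nᵀ *ᵥ v) ⬝ᵥ S *ᵥ v := dot_flip S hSsymm v _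
      rw [this, hSv, dotProduct_zero]
      simp
    have := hD.dotProduct_mulVec_pos hv
    rw [hstar, hDv] at this
    exact lt_irrefl 0 this
  -- minimum of the quadratic form of S on the unit sphere
  obtain ⟨u₀, hu₀mem, hu₀min'⟩ := (isCompact_sphere (0 : n → ℝ) 1).exists_isMinOn
    (NormedSpace.sphere_nonempty.mpr zero_le_one)
    (quad_continuous S).continuousOn
  have hu₀min : ∀ v ∈ Metric.sphere (0 : n → ℝ) 1, u₀ ⬝ᵥ S *ᵥ u₀ ≤ v ⬝ᵥ S *ᵥ v :=
    fun v hv => hu₀min' hv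
  set c : ℝ := u₀ ⬝ᵥ S *ᵥ u₀ with hc
  have hu₀norm : ‖u₀‖ = 1 := by simpa using mem_sphere_iff_norm.mp hu₀mem
  have hu₀ne : u₀ ≠ 0 := fun h => by simp [h] at hu₀norm
  have hcpos : 0 < c := by
    have := hSpd.dotProduct_mulVec_pos hu₀ne; rwa [hstar] at this
  -- lower bound for quadratic form of S
  have hSlower : ∀ v : n → ℝ, c * ‖v‖ ^ 2 ≤ v ⬝ᵥ S *ᵥ v := by
    intro v
    rcases eq_or_ne v 0 with rfl | hv
    · simp
    have hnv : 0 < ‖v‖ := norm_pos_iff.mpr hv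
    set u : n → ℝ := ‖v‖⁻¹ • v with hu
    have hunorm : u ∈ Metric.sphere (0 : n → ℝ) 1 := by
      simp [hu, norm_smul, abs_of_pos (inv_pos.mpr hnv), inv_mul_cancel₀ hnv.ne']
    have hcu : c ≤ u ⬝ᵥ S *ᵥ u := hu₀min u hunorm
    have hq : u ⬝ᵥ S *ᵥ u = (‖v‖⁻¹) ^ 2 * (v ⬝ᵥ S *ᵥ v) := quad_smul S _ v
    rw [hq] at hcu
    have := mul_le_mul_of_nonneg_left hcu (by positivity : (0:ℝ) ≤ ‖v‖ ^ 2)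
    calc c * ‖v‖ ^ 2 = ‖v‖ ^ 2 * c := by ring
      _ ≤ ‖v‖ ^ 2 * ((‖v‖⁻¹) ^ 2 * (v ⬝ᵥ S *ᵥ v)) := this
      _ = v ⬝ᵥ S *ᵥ v := by
          field_simp
  -- push beyond the supremum
  set K : ℝ := ∑ x, ∑ y, |Δ x y| with hK
  have hKnn : 0 ≤ K := Finset.sum_nonneg fun x _ => Finset.sum_nonneg fun y _ => abs_nonneg _
  set δ : ℝ := c / (K + 1) with hδ
  have hδpos : 0 < δ := div_pos hcpos (by linarith)
  have hmem : ε₀ + δ ∈ A := by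
    refine ⟨by linarith [hε₀A.1], .of_dotProduct_mulVec_nonneg (herm_of_symm (hherm _)) fun v => ?_⟩
    rw [hstar, quad_add_smul]
    have h1 : v ⬝ᵥ T *ᵥ v + ε₀ * (v ⬝ᵥ Δ *ᵥ v) = v ⬝ᵥ S *ᵥ v := (quad_add_smul T Δ ε₀ v).symm
    have h2 := hSlower v
    have h3 : |v ⬝ᵥ Δ *ᵥ v| ≤ K * ‖v‖ ^ 2 := quad_bound Δ v
    have h4 : δ * (K * ‖v‖ ^ 2) ≤ c * ‖v‖ ^ 2 := by
      rw [hδ]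
      rw [div_mul_eq_mul_div, div_le_iff₀ (by linarith : (0:ℝ) < K + 1)]
      nlinarith [sq_nonneg ‖v‖]
    have h5 : -(δ * (v ⬝ᵥ Δ *ᵥ v)) ≤ δ * (K * ‖v‖ ^ 2) := by
      rw [← mul_neg]
      exact mul_le_mul_of_nonneg_left (neg_le_abs _ |>.trans h3) hδpos.le
    nlinarith
  have : ε₀ + δ ≤ ε₀ := le_csSup hbdd hmem
  linarith

lemma lyap_delta_zero (N T D Δ : Matrix n n ℝ) (hT : T.PosDef) (hD : D.PosDef)
    (hlyap : N * T + T * Nᵀ + D = 0)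
    (hΔs : Δᵀ = Δ) (hΔ : N * Δ + Δ * Nᵀ = 0) : Δ = 0 := by
  apply symm_quad_zero Δ hΔs
  intro v
  by_contra h
  rcases lt_or_gt_of_ne h with hneg | hpos
  · exact lyap_no_neg N T D Δ hT hD hlyap hΔs hΔ v hneg
  · refine lyap_no_neg N T D (-Δ) hT hD hlyap ?_ ?_ v ?_
    · rw [transpose_neg, hΔs]
    · rw [Matrix.mul_neg, Matrix.neg_mul, ← neg_add, hΔ, neg_zero]
    · rw [neg_mulVec, dotProduct_neg]
      linarith

lemma dot_self_nonneg (v : n → ℝ) : 0 ≤ v ⬝ᵥ v :=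
  Finset.sum_nonneg fun i _ => mul_self_nonneg _

lemma sandwich_posdef (R : Matrix n n ℝ) (hRt : Rᵀ = R) (hRR : R * R = R)
    (S : Matrix n n ℝ) (hS : S.PosDef) : (R * S * R + (1 - R)).PosDef := by
  have hstar : ∀ v : n → ℝ, star v = v := fun v => funext fun i => star_trivial _
  have hSt : Sᵀ = S := by
    have := hS.1; rwa [Matrix.IsHermitian, conjTranspose_eq_transpose_of_trivial] at this
  have hJJ : (1 - R) * (1 - R) = 1 - R := by
    rw [mul_sub, mul_one, sub_mul, one_mul, hRR]; abel
  have hJt : (1 - R)ᵀ = 1 - R := by rw [transpose_sub, transpose_one, hRt]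
  refine .of_dotProduct_mulVec_pos ?_ ?_
  · rw [Matrix.IsHermitian, conjTranspose_eq_transpose_of_trivial, transpose_add, hJt,
      transpose_mul, transpose_mul, hRt, hSt, Matrix.mul_assoc]
  · intro v hv
    rw [hstar, add_mulVec, dotProduct_add]
    have h1 : v ⬝ᵥ (R * S * R) *ᵥ v = (R *ᵥ v) ⬝ᵥ S *ᵥ (R *ᵥ v) := by
      rw [← mulVec_mulVec, ← mulVec_mulVec, dotProduct_mulVec, ← mulVec_transpose, hRt]
    have h2 : v ⬝ᵥ (1 - R) *ᵥ v = ((1 - R) *ᵥ v) ⬝ᵥ ((1 - R) *ᵥ v) := by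
      conv_lhs => rw [← hJJ]
      rw [← mulVec_mulVec, dotProduct_mulVec, ← mulVec_transpose, hJt]
    rw [h1, h2]
    have hsum : R *ᵥ v + (1 - R) *ᵥ v = v := by rw [← add_mulVec]; simp
    rcases eq_or_ne (R *ᵥ v) 0 with h | h
    · have hJv : (1 - R) *ᵥ v = v := by
        have := hsum; rw [h, zero_add] at this; exact this
      rw [h, hJv]
      have hne : v ⬝ᵥ v ≠ 0 := fun hc => hv (dotProduct_self_eq_zero.mp hc)
      have hnn : 0 ≤ v ⬝ᵥ v := dot_self_nonneg v
      simp only [dotProduct_zero, zero_dotProduct, mulVec_zero]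
      have : 0 < v ⬝ᵥ v := lt_of_le_of_ne hnn (Ne.symm hne)
      linarith
    · have ha : 0 < (R *ᵥ v) ⬝ᵥ S *ᵥ (R *ᵥ v) := by
        have := hS.dotProduct_mulVec_pos h; rwa [hstar] at this
      have hb : 0 ≤ ((1 - R) *ᵥ v) ⬝ᵥ ((1 - R) *ᵥ v) := dot_self_nonneg _
      linarith

end Helpers

set_option maxHeartbeats 1000000 in
/-- for diagonal positive definite `C`, if there is no trek between
`i` and `j` (no common node `t` with directed paths to both `i` and `j`), then
`Σ i j = 0` for every `Σ` in the model. -/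
theorem no_trek_implies_zero_covariance {p : ℕ}
    (E : Set (Fin p × Fin p)) (hloops : ∀ i : Fin p, (i, i) ∈ E)
    (C : Matrix (Fin p) (Fin p) ℝ) (hC : C.PosDef)
    (hdiag : ∀ i j : Fin p, i ≠ j → C i j = 0)
    (i j : Fin p)
    (htrek : ¬ ∃ t : Fin p,
      Relation.ReflTransGen (fun a b : Fin p => (a, b) ∈ E) t i ∧
      Relation.ReflTransGen (fun a b : Fin p => (a, b) ∈ E) t j) :
    ∀ S ∈ LyapModel E C, S i j = 0 := by
  classical
  rintro S ⟨hSpd, M, hMsupp, hMeq⟩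
  set r : Fin p → Fin p → Prop := fun a b => (a, b) ∈ E with hr
  -- indicator functions of ancestor sets
  set pA : Fin p → ℝ := fun a => if Relation.ReflTransGen r a i then 1 else 0 with hpA
  set qB : Fin p → ℝ := fun a => if Relation.ReflTransGen r a j then 1 else 0 with hqB
  have hdisj : ∀ a, pA a * qB a = 0 := by
    intro a
    by_cases h1 : Relation.ReflTransGen r a i
    · by_cases h2 : Relation.ReflTransGen r a j
      · exact absurd ⟨a, h1, h2⟩ htrek
      · simp [hpA, hqB, h1, h2]
    · simp [hpA, hqB, h1]
  have hpAi : pA i = 1 := by simp [hpA, Relation.ReflTransGen.refl]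
  have hqBj : qB j = 1 := by simp [hqB, Relation.ReflTransGen.refl]
  have hqBi : qB i = 0 := by
    have h1 : Relation.ReflTransGen r i i := Relation.ReflTransGen.refl
    by_cases h2 : Relation.ReflTransGen r i j
    · exact absurd ⟨i, h1, h2⟩ htrek
    · simp [hqB, h2]
  -- idempotency / booleans
  have hpp : ∀ a, pA a * pA a = pA a := by
    intro a; by_cases h : Relation.ReflTransGen r a i <;> simp [hpA, h]
  have hqq : ∀ a, qB a * qB a = qB a := by
    intro a; by_cases h : Relation.ReflTransGen r a j <;> simp [hqB, h]
  set P : Matrix (Fin p) (Fin p) ℝ := Matrix.diagonal pA with hP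
  set Q : Matrix (Fin p) (Fin p) ℝ := Matrix.diagonal qB with hQ
  have hPt : Pᵀ = P := diagonal_transpose pA
  have hQt : Qᵀ = Q := diagonal_transpose qB
  have hPP : P * P = P := by rw [hP, diagonal_mul_diagonal]; exact congrArg _ (funext hpp)
  have hQQ : Q * Q = Q := by rw [hQ, diagonal_mul_diagonal]; exact congrArg _ (funext hqq)
  have hPQ : P * Q = 0 := by
    rw [hP, hQ, diagonal_mul_diagonal, funext hdisj, diagonal_zero]
  have hQP : Q * P = 0 := by
    have : ∀ a, qB a * pA a = 0 := fun a => by rw [mul_comm]; exact hdisj a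
    rw [hP, hQ, diagonal_mul_diagonal, funext this, diagonal_zero]
  -- support closure
  have hPM : P * M = P * M * P := by
    rw [hP]
    ext a b
    simp only [Matrix.mul_assoc, Matrix.diagonal_mul, Matrix.mul_diagonal]
    by_cases ha : Relation.ReflTransGen r a i
    · by_cases hMab : M a b = 0
      · simp [hMab]
      · have hE : (b, a) ∈ E := by
          by_contra hne; exact hMab (hMsupp b a hne)
        have hb : Relation.ReflTransGen r b i := Relation.ReflTransGen.head hE ha
        simp [hpA, hb]
    · simp [hpA, ha]
  have hQM : Q * M = Q * M * Q := by
    rw [hQ]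
    ext a b
    simp only [Matrix.mul_assoc, Matrix.diagonal_mul, Matrix.mul_diagonal]
    by_cases ha : Relation.ReflTransGen r a j
    · by_cases hMab : M a b = 0
      · simp [hMab]
      · have hE : (b, a) ∈ E := by
          by_contra hne; exact hMab (hMsupp b a hne)
        have hb : Relation.ReflTransGen r b j := Relation.ReflTransGen.head hE ha
        simp [hqB, hb]
    · simp [hqB, ha]
  -- diagonal of C kills cross terms
  have hSt : Sᵀ = S := by
    have := hSpd.1; rwa [Matrix.IsHermitian, conjTranspose_eq_transpose_of_trivial] at this
  have hPCQ : P * C * Q = 0 := by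
    rw [hP, hQ]
    ext a b
    simp only [Matrix.mul_assoc, Matrix.diagonal_mul, Matrix.mul_diagonal, Matrix.zero_apply]
    rcases eq_or_ne a b with rfl | hne
    · linear_combination (C a a) * hdisj a
    · rw [hdiag a b hne]; ring
  have hQCP : Q * C * P = 0 := by
    rw [hP, hQ]
    ext a b
    simp only [Matrix.mul_assoc, Matrix.diagonal_mul, Matrix.mul_diagonal, Matrix.zero_apply]
    rcases eq_or_ne a b with rfl | hne
    · linear_combination (C a a) * hdisj a
    · rw [hdiag a b hne]; ring
  -- R and friends
  set R : Matrix (Fin p) (Fin p) ℝ := P + Q with hR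
  have hRt : Rᵀ = R := by rw [hR, transpose_add, hPt, hQt]
  have hRR : R * R = R := by
    rw [hR, add_mul, mul_add, mul_add, hPP, hPQ, hQP, hQQ]; abel
  have hRP : R * P = P := by rw [hR, add_mul, hPP, hQP, add_zero]
  have hRQ : R * Q = Q := by rw [hR, add_mul, hPQ, hQQ, zero_add]
  have hPR : P * R = P := by rw [hR, mul_add, hPP, hPQ, add_zero]
  have hQR : Q * R = Q := by rw [hR, mul_add, hQP, hQQ, zero_add]
  have eRM : R * M = P * M + Q * M := by rw [hR, add_mul]
  have hRMP : R * M * P = P * M := by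
    rw [eRM, add_mul, hPM, hQM, Matrix.mul_assoc (P * M) P P, hPP,
      Matrix.mul_assoc (Q * M) Q P, hQP, Matrix.mul_zero, add_zero, ← hPM]
  have hRMQ : R * M * Q = Q * M := by
    rw [eRM, add_mul, hPM, hQM, Matrix.mul_assoc (P * M) P Q, hPQ,
      Matrix.mul_assoc (Q * M) Q Q, hQQ, Matrix.mul_zero, zero_add, ← hQM]
  have hRMR : R * M * R = R * M := by
    rw [hR, mul_add, hRMP, hRMQ, ← add_mul, ← hR, eRM]
  -- right-associated collapse rules
  have cRRx : ∀ X : Matrix (Fin p) (Fin p) ℝ, R * (R * X) = R * X := by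
    intro X; rw [← Matrix.mul_assoc, hRR]
  have cRPx : ∀ X : Matrix (Fin p) (Fin p) ℝ, R * (P * X) = P * X := by
    intro X; rw [← Matrix.mul_assoc, hRP]
  have cRQx : ∀ X : Matrix (Fin p) (Fin p) ℝ, R * (Q * X) = Q * X := by
    intro X; rw [← Matrix.mul_assoc, hRQ]
  have cPRx : ∀ X : Matrix (Fin p) (Fin p) ℝ, P * (R * X) = P * X := by
    intro X; rw [← Matrix.mul_assoc, hPR]
  have cQRx : ∀ X : Matrix (Fin p) (Fin p) ℝ, Q * (R * X) = Q * X := by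
    intro X; rw [← Matrix.mul_assoc, hQR]
  have cRMR : R * (M * R) = R * M := by rw [← Matrix.mul_assoc, hRMR]
  have cRMRx : ∀ X : Matrix (Fin p) (Fin p) ℝ, R * (M * (R * X)) = R * (M * X) := by
    intro X
    rw [← Matrix.mul_assoc M, ← Matrix.mul_assoc R, cRMR, Matrix.mul_assoc]
  have cRMP : R * (M * P) = P * M := by rw [← Matrix.mul_assoc, hRMP]
  have cRMPx : ∀ X : Matrix (Fin p) (Fin p) ℝ, R * (M * (P * X)) = P * (M * X) := by
    intro X
    rw [← Matrix.mul_assoc M, ← Matrix.mul_assoc R, cRMP, Matrix.mul_assoc]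
  have cRMQ : R * (M * Q) = Q * M := by rw [← Matrix.mul_assoc, hRMQ]
  have cRMQx : ∀ X : Matrix (Fin p) (Fin p) ℝ, R * (M * (Q * X)) = Q * (M * X) := by
    intro X
    rw [← Matrix.mul_assoc M, ← Matrix.mul_assoc R, cRMQ, Matrix.mul_assoc]
  -- transposed collapse rules
  have cRMtR : R * (Mᵀ * R) = Mᵀ * R := by
    have := congrArg Matrix.transpose hRMR
    rwa [transpose_mul, transpose_mul, hRt] at this
  have cRMtRx : ∀ X : Matrix (Fin p) (Fin p) ℝ, R * (Mᵀ * (R * X)) = Mᵀ * (R * X) := by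
    intro X
    rw [← Matrix.mul_assoc Mᵀ R X, ← Matrix.mul_assoc R, cRMtR, Matrix.mul_assoc]
  have cPMtR : P * (Mᵀ * R) = Mᵀ * P := by
    have := congrArg Matrix.transpose hRMP
    rwa [transpose_mul, transpose_mul, transpose_mul, hRt, hPt] at this
  have cPMtRx : ∀ X : Matrix (Fin p) (Fin p) ℝ, P * (Mᵀ * (R * X)) = Mᵀ * (P * X) := by
    intro X
    rw [← Matrix.mul_assoc Mᵀ R X, ← Matrix.mul_assoc P, cPMtR, Matrix.mul_assoc]
  have cQMtR : Q * (Mᵀ * R) = Mᵀ * Q := by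
    have := congrArg Matrix.transpose hRMQ
    rwa [transpose_mul, transpose_mul, transpose_mul, hRt, hQt] at this
  have cQMtRx : ∀ X : Matrix (Fin p) (Fin p) ℝ, Q * (Mᵀ * (R * X)) = Mᵀ * (Q * X) := by
    intro X
    rw [← Matrix.mul_assoc Mᵀ R X, ← Matrix.mul_assoc Q, cQMtR, Matrix.mul_assoc]
  -- the reduced Lyapunov data
  have hNt : (R * M * R - (2⁻¹ : ℝ) • (1 - R))ᵀ = R * Mᵀ * R - (2⁻¹ : ℝ) • (1 - R) := by
    rw [transpose_sub, transpose_smul, transpose_sub, transpose_one, transpose_mul,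
      transpose_mul, hRt, Matrix.mul_assoc]
  have hclaim1 : (R * M * R - (2⁻¹ : ℝ) • (1 - R)) * (R * S * R + (1 - R))
      + (R * S * R + (1 - R)) * (R * M * R - (2⁻¹ : ℝ) • (1 - R))ᵀ
      + (R * C * R + (1 - R)) = R * (M * S + S * Mᵀ + C) * R := by
    rw [hNt]
    simp only [mul_add, add_mul, mul_sub, sub_mul, mul_one, one_mul, Matrix.smul_mul,
      Matrix.mul_smul, smul_add, smul_sub, Matrix.mul_assoc, cRRx, hRR, cRMRx, cRMR,
      cRMtRx, cRMtR]
    module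
  have hclaim2 : (R * M * R - (2⁻¹ : ℝ) • (1 - R)) * (P * S * Q + Q * S * P)
      + (P * S * Q + Q * S * P) * (R * M * R - (2⁻¹ : ℝ) • (1 - R))ᵀ
      = P * (M * S + S * Mᵀ + C) * Q + Q * (M * S + S * Mᵀ + C) * P
        - P * C * Q - Q * C * P := by
    rw [hNt]
    simp only [mul_add, add_mul, mul_sub, sub_mul, mul_one, one_mul, Matrix.smul_mul,
      Matrix.mul_smul, smul_add, smul_sub, Matrix.mul_assoc, cRRx, hRR, cRPx, cRQx,
      cPRx, cQRx, hRP, hRQ, hPR, hQR, cRMPx, cRMP, cRMQx, cRMQ, cPMtRx, cPMtR,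
      cQMtRx, cQMtR]
    module
  -- Δ is symmetric
  have hΔs : (P * S * Q + Q * S * P)ᵀ = P * S * Q + Q * S * P := by
    simp only [transpose_add, transpose_mul, hPt, hQt, hSt, Matrix.mul_assoc]
    abel
  -- positive definiteness of the reduced T and D
  have hTpd : (R * S * R + (1 - R)).PosDef := sandwich_posdef R hRt hRR S hSpd
  have hDpd : (R * C * R + (1 - R)).PosDef := sandwich_posdef R hRt hRR C hC
  -- apply the uniqueness lemma
  have hΔ0 : P * S * Q + Q * S * P = 0 := by
    refine lyap_delta_zero (R * M * R - (2⁻¹ : ℝ) • (1 - R)) (R * S * R + (1 - R))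
      (R * C * R + (1 - R)) (P * S * Q + Q * S * P) hTpd hDpd ?_ hΔs ?_
    · rw [hclaim1, hMeq, Matrix.mul_zero, Matrix.zero_mul]
    · rw [hclaim2, hMeq, hPCQ, hQCP]
      simp
  -- extract the entry
  rw [hP, hQ] at hΔ0
  have hent := congrFun (congrFun hΔ0 i) j
  simp only [Matrix.add_apply, Matrix.zero_apply, Matrix.mul_assoc,
    Matrix.diagonal_mul, Matrix.mul_diagonal] at hent
  rw [hpAi, hqBj, hqBi] at hent
  simpa using hent
end

section
/- Let G=(V,E) be a directed graph on V=[p] containing all self-loops, and let C be a diagonal positive definite p×p matrix. If the graphical continuous Lyapunov model M_{G,C} is generically identifiable, then |E| ≤ p(p+1)/2 − N, where N is the number of unordered pairs {i,j} of vertices i,j ∈ V such that there is no trek between i and j in G. -/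
open Matrix MeasureTheory

namespace AuxLyap
variable {p : ℕ}

/-! ### Spectral lemmas: stability from a Lyapunov certificate -/

lemma eigvec_transpose (μ : ℂ) (A : Matrix (Fin p) (Fin p) ℂ) (h : μ ∈ spectrum ℂ A) :
    ∃ v ≠ 0, Aᵀ *ᵥ v = μ • v := by
  rw [spectrum.mem_iff] at h
  have hd : (μ • (1 : Matrix (Fin p) (Fin p) ℂ) - A).det = 0 := by
    by_contra hd
    exact h (by rw [Matrix.isUnit_iff_isUnit_det, Algebra.algebraMap_eq_smul_one]
                exact isUnit_iff_ne_zero.2 hd)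
  have hd2 : (μ • (1 : Matrix (Fin p) (Fin p) ℂ) - Aᵀ).det = 0 := by
    have : (μ • (1 : Matrix (Fin p) (Fin p) ℂ) - Aᵀ) = (μ • 1 - A)ᵀ := by
      rw [Matrix.transpose_sub, Matrix.transpose_smul, Matrix.transpose_one]
    rw [this, Matrix.det_transpose]; exact hd
  obtain ⟨v, hv, hveq⟩ := (Matrix.exists_mulVec_eq_zero_iff).2 hd2
  refine ⟨v, hv, ?_⟩
  have := congrArg (fun w => Aᵀ *ᵥ v + w) hveq
  simp [Matrix.sub_mulVec, Matrix.smul_mulVec, Matrix.one_mulVec] at this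
  exact this.symm

lemma real_mulVec_star (A : Matrix (Fin p) (Fin p) ℝ) (v : Fin p → ℂ) :
    (A.map (algebraMap ℝ ℂ)) *ᵥ (star v) = star ((A.map (algebraMap ℝ ℂ)) *ᵥ v) := by
  have hcoe : ⇑(algebraMap ℝ ℂ) = Complex.ofReal := rfl
  ext i
  simp only [Matrix.mulVec, dotProduct, Pi.star_apply, Matrix.map_apply, hcoe]
  rw [star_sum]
  refine Finset.sum_congr rfl fun j _ => ?_
  rw [star_mul', Complex.star_def, Complex.conj_ofReal]

lemma quad_im_re (S : Matrix (Fin p) (Fin p) ℝ) (hsym : Sᵀ = S) (v : Fin p → ℂ) :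
    (star v ⬝ᵥ (S.map (algebraMap ℝ ℂ)) *ᵥ v).im = 0 ∧
    (star v ⬝ᵥ (S.map (algebraMap ℝ ℂ)) *ᵥ v).re
      = (fun i => (v i).re) ⬝ᵥ S *ᵥ (fun i => (v i).re)
        + (fun i => (v i).im) ⬝ᵥ S *ᵥ (fun i => (v i).im) := by
  have hcoe : ⇑(algebraMap ℝ ℂ) = Complex.ofReal := rfl
  have hq : star v ⬝ᵥ (S.map (algebraMap ℝ ℂ)) *ᵥ v
      = ∑ j, ∑ k, ((S j k : ℂ) * ((starRingEnd ℂ) (v j) * v k)) := by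
    simp only [dotProduct, Matrix.mulVec, Pi.star_apply, Matrix.map_apply,
      Finset.mul_sum, hcoe]
    refine Finset.sum_congr rfl fun j _ => Finset.sum_congr rfl fun k _ => ?_
    rw [Complex.star_def]; ring
  constructor
  · rw [hq]
    rw [Complex.im_sum]
    have h1 : ∀ j, (∑ k, ((S j k : ℂ) * ((starRingEnd ℂ) (v j) * v k))).im
        = ∑ k, S j k * ((v j).re * (v k).im - (v j).im * (v k).re) := by
      intro j; rw [Complex.im_sum]
      refine Finset.sum_congr rfl fun k _ => ?_
      rw [Complex.im_ofReal_mul, Complex.mul_im, Complex.conj_re, Complex.conj_im]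
      ring
    rw [Finset.sum_congr rfl fun j _ => h1 j]
    have : ∑ j, ∑ k, S j k * ((v j).re * (v k).im - (v j).im * (v k).re)
        = ∑ j, ∑ k, S j k * (v j).re * (v k).im
          - ∑ j, ∑ k, S j k * (v j).im * (v k).re := by
      rw [← Finset.sum_sub_distrib]
      refine Finset.sum_congr rfl fun j _ => ?_
      rw [← Finset.sum_sub_distrib]
      refine Finset.sum_congr rfl fun k _ => by ring
    rw [this, sub_eq_zero]
    rw [Finset.sum_comm]
    refine Finset.sum_congr rfl fun k _ => Finset.sum_congr rfl fun j _ => ?_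
    have : S k j = S j k := congrFun (congrFun hsym j) k
    rw [this]; ring
  · rw [hq, Complex.re_sum]
    simp only [dotProduct, Matrix.mulVec]
    rw [← Finset.sum_add_distrib]
    refine Finset.sum_congr rfl fun j _ => ?_
    rw [Complex.re_sum, Finset.mul_sum, Finset.mul_sum, ← Finset.sum_add_distrib]
    refine Finset.sum_congr rfl fun k _ => ?_
    rw [Complex.re_ofReal_mul, Complex.mul_re, Complex.conj_re, Complex.conj_im]
    ring

lemma quad_pos (S : Matrix (Fin p) (Fin p) ℝ) (hS : S.PosDef) (v : Fin p → ℂ) (hv : v ≠ 0) :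
    0 < (star v ⬝ᵥ (S.map (algebraMap ℝ ℂ)) *ᵥ v).re ∧
    (star v ⬝ᵥ (S.map (algebraMap ℝ ℂ)) *ᵥ v).im = 0 := by
  have hsym : Sᵀ = S := by
    have := hS.1
    rwa [Matrix.IsHermitian, Matrix.conjTranspose_eq_transpose_of_trivial] at this
  obtain ⟨him, hre⟩ := quad_im_re S hsym v
  refine ⟨?_, him⟩
  rw [hre]
  set x : Fin p → ℝ := fun i => (v i).re with hx
  set y : Fin p → ℝ := fun i => (v i).im with hy
  have hxy : x ≠ 0 ∨ y ≠ 0 := by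
    by_contra hcon
    push_neg at hcon
    apply hv
    funext i
    have h1 := congrFun hcon.1 i
    have h2 := congrFun hcon.2 i
    simp [hx, hy] at h1 h2
    exact Complex.ext h1 h2
  have key : ∀ w : Fin p → ℝ, 0 ≤ w ⬝ᵥ S *ᵥ w := by
    intro w
    by_cases hw : w = 0
    · simp [hw]
    · have := hS.dotProduct_mulVec_pos hw
      simpa using this.le
  rcases hxy with h | h
  · have := hS.dotProduct_mulVec_pos h
    simp only [star_trivial] at this
    nlinarith [key y]
  · have := hS.dotProduct_mulVec_pos h
    simp only [star_trivial] at this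
    nlinarith [key x]

lemma stable_of_lyap (M S C : Matrix (Fin p) (Fin p) ℝ) (hS : S.PosDef) (hC : C.PosDef)
    (h : M * S + S * Mᵀ + C = 0) : IsStableMat M := by
  intro μ hμ
  set A := M.map (algebraMap ℝ ℂ) with hA
  set Smap := S.map (algebraMap ℝ ℂ) with hSmap
  set Cmap := C.map (algebraMap ℝ ℂ) with hCmap
  obtain ⟨v, hv, hvec⟩ := eigvec_transpose μ A hμ
  have hℂ : A * Smap + Smap * Aᵀ + Cmap = 0 := by
    have h2 := congrArg (RingHom.mapMatrix (algebraMap ℝ ℂ)) h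
    simp only [map_add, _root_.map_mul, map_zero, RingHom.mapMatrix_apply,
      Matrix.transpose_map] at h2
    exact h2
  set s := star v ⬝ᵥ Smap *ᵥ v with hs
  set c := star v ⬝ᵥ Cmap *ᵥ v with hc
  have e0 : star v ⬝ᵥ ((A * Smap + Smap * Aᵀ + Cmap) *ᵥ v) = 0 := by
    rw [hℂ]; simp
  have estarA : star v ᵥ* A = (starRingEnd ℂ) μ • star v := by
    have h1 : star v ᵥ* A = Aᵀ *ᵥ star v := by
      rw [← Matrix.vecMul_transpose, Matrix.transpose_transpose]
    have h2 : Aᵀ *ᵥ star v = star (Aᵀ *ᵥ v) := by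
      have : Aᵀ = (Mᵀ).map (algebraMap ℝ ℂ) := by rw [hA, Matrix.transpose_map]
      rw [this, real_mulVec_star]
    rw [h1, h2, hvec, star_smul]
    rfl
  have e1 : star v ⬝ᵥ ((A * Smap) *ᵥ v) = (starRingEnd ℂ) μ * s := by
    rw [← Matrix.mulVec_mulVec, Matrix.dotProduct_mulVec, estarA,
      smul_dotProduct, smul_eq_mul]
  have e2 : star v ⬝ᵥ ((Smap * Aᵀ) *ᵥ v) = μ * s := by
    rw [← Matrix.mulVec_mulVec, hvec, Matrix.mulVec_smul, dotProduct_smul,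
      smul_eq_mul]
  have hsum : (starRingEnd ℂ) μ * s + μ * s + c = 0 := by
    rw [← e1, ← e2, hc]
    rw [← e0]
    simp [Matrix.add_mulVec, dotProduct_add]
  obtain ⟨hsre, hsim⟩ := quad_pos S hS v hv
  obtain ⟨hcre, hcim⟩ := quad_pos C hC v hv
  have hre := congrArg Complex.re hsum
  simp only [Complex.add_re, Complex.mul_re, Complex.conj_re, Complex.conj_im,
    Complex.zero_re] at hre
  nlinarith [hsre, hcre, hre]

/-! ### Dissipative matrices: injectivity of the Lyapunov operator -/

lemma quadT (M : Matrix (Fin p) (Fin p) ℝ) (w : Fin p → ℝ) :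
    w ⬝ᵥ (Mᵀ *ᵥ w) = w ⬝ᵥ (M *ᵥ w) := by
  rw [Matrix.dotProduct_mulVec, Matrix.vecMul_transpose, dotProduct_comm]

lemma diss_inj (M : Matrix (Fin p) (Fin p) ℝ)
    (hdiss : ∀ w : Fin p → ℝ, w ≠ 0 → w ⬝ᵥ (M *ᵥ w) < 0)
    (X : Matrix (Fin p) (Fin p) ℝ) (hX : M * X + X * Mᵀ = 0) : X = 0 := by
  by_contra hX0
  have h0 : ∑ i, ∑ j, ((M * X + X * Mᵀ) i j) * X i j = 0 := by
    rw [hX]; simp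
  have hcol : ∑ i, ∑ j, ((M * X) i j) * X i j
      = ∑ j, (fun i => X i j) ⬝ᵥ (M *ᵥ (fun i => X i j)) := by
    rw [Finset.sum_comm]
    refine Finset.sum_congr rfl fun j _ => ?_
    simp only [Matrix.mul_apply, dotProduct, Matrix.mulVec, Finset.sum_mul,
      Finset.mul_sum]
    refine Finset.sum_congr rfl fun i _ => Finset.sum_congr rfl fun k _ => by ring
  have hrow : ∑ i, ∑ j, ((X * Mᵀ) i j) * X i j
      = ∑ i, (fun k => X i k) ⬝ᵥ (Mᵀ *ᵥ (fun k => X i k)) := by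
    refine Finset.sum_congr rfl fun i _ => ?_
    simp only [Matrix.mul_apply, dotProduct, Matrix.mulVec, Finset.sum_mul,
      Finset.mul_sum]
    rw [Finset.sum_comm]
    refine Finset.sum_congr rfl fun j _ => Finset.sum_congr rfl fun k _ => by ring
  have hterm : ∀ w : Fin p → ℝ, w ⬝ᵥ (M *ᵥ w) ≤ 0 := by
    intro w
    by_cases hw : w = 0
    · simp [hw]
    · exact (hdiss w hw).le
  obtain ⟨i0, j0, hij⟩ : ∃ i j, X i j ≠ 0 := by
    by_contra hcon
    push_neg at hcon
    exact hX0 (by ext i j; simpa using hcon i j)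
  have hc0 : (fun i => X i j0) ≠ 0 := by
    intro h
    exact hij (by simpa using congrFun h i0)
  have hstrict : ∑ j, (fun i => X i j) ⬝ᵥ (M *ᵥ (fun i => X i j)) < 0 := by
    have := Finset.sum_lt_sum (s := Finset.univ)
      (f := fun j => (fun i => X i j) ⬝ᵥ (M *ᵥ (fun i => X i j)))
      (g := fun _ => (0:ℝ))
      (fun j _ => hterm _) ⟨j0, Finset.mem_univ _, hdiss _ hc0⟩
    simpa using this
  have hnp : ∑ i, (fun k => X i k) ⬝ᵥ (Mᵀ *ᵥ (fun k => X i k)) ≤ 0 := by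
    refine Finset.sum_nonpos fun i _ => ?_
    rw [quadT]; exact hterm _
  have hsplit : ∑ i, ∑ j, ((M * X + X * Mᵀ) i j) * X i j
      = (∑ i, ∑ j, ((M * X) i j) * X i j) + (∑ i, ∑ j, ((X * Mᵀ) i j) * X i j) := by
    rw [← Finset.sum_add_distrib]
    refine Finset.sum_congr rfl fun i _ => ?_
    rw [← Finset.sum_add_distrib]
    refine Finset.sum_congr rfl fun j _ => ?_
    simp [Matrix.add_apply]; ring
  rw [hsplit, hcol, hrow] at h0
  linarith

lemma diss_ball (E : Finset (Fin p × Fin p)) (hloops : ∀ i : Fin p, (i, i) ∈ E)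
    (f : E → ℝ)
    (hf : ∀ e : E, |f e - (if (e : Fin p × Fin p).1 = (e : Fin p × Fin p).2
        then (-1 : ℝ) else 0)| ≤ 1 / (2 * (p + 1))) :
    ∀ w : Fin p → ℝ, w ≠ 0 → w ⬝ᵥ ((edgeMatrix E f) *ᵥ w) < 0 := by
  intro w hw
  set M := edgeMatrix E f with hMdef
  set ε : ℝ := 1 / (2 * (p + 1)) with hε
  have hεpos : 0 < ε := by positivity
  have hM : ∀ j i, |M j i - (if j = i then (-1:ℝ) else 0)| ≤ ε := by
    intro j i
    by_cases h : (i, j) ∈ E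
    · have := hf ⟨(i, j), h⟩
      simp only [hMdef, edgeMatrix, dif_pos h]
      by_cases h2 : i = j
      · subst h2; simpa using this
      · have h3 : j ≠ i := fun hh => h2 hh.symm
        simp only [if_neg h3]
        simpa [if_neg h2] using this
    · have hij : i ≠ j := fun hh => h (hh ▸ hloops i)
      have h3 : j ≠ i := fun hh => hij hh.symm
      simp [hMdef, edgeMatrix, dif_neg h, if_neg h3, hεpos.le]
  set s : ℝ := ∑ i, w i ^ 2 with hs
  have hspos : 0 < s := by
    obtain ⟨i0, hi0⟩ : ∃ i, w i ≠ 0 := by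
      by_contra hcon
      push_neg at hcon
      exact hw (funext fun i => hcon i)
    exact Finset.sum_pos' (fun i _ => sq_nonneg _)
      ⟨i0, Finset.mem_univ _, by positivity⟩
  have expand : w ⬝ᵥ M *ᵥ w
      = (∑ j, ∑ i, w j * (M j i - ite (j = i) (-1:ℝ) 0) * w i) - s := by
    have h1 : ∀ j, ∑ i, w j * M j i * w i
        = (∑ i, w j * (M j i - ite (j = i) (-1:ℝ) 0) * w i) - w j ^ 2 := by
      intro j
      have h2 : ∑ i, w j * (M j i - ite (j = i) (-1:ℝ) 0) * w i
          = (∑ i, w j * M j i * w i) - ∑ i, w j * (ite (j = i) (-1:ℝ) 0) * w i := by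
        rw [← Finset.sum_sub_distrib]
        exact Finset.sum_congr rfl fun i _ => by ring
      have h3 : ∑ i, w j * (ite (j = i) (-1:ℝ) 0) * w i = -(w j ^ 2) := by
        rw [Finset.sum_eq_single j]
        · simp; ring
        · intro b _ hb
          simp [Ne.symm hb]
        · intro hb
          exact absurd (Finset.mem_univ j) hb
      rw [h2, h3]; ring
    simp only [dotProduct, Matrix.mulVec, Finset.mul_sum]
    rw [Finset.sum_congr rfl fun j _ => ?_]
    · rw [Finset.sum_congr rfl fun j _ => h1 j, Finset.sum_sub_distrib, hs]
    · exact Finset.sum_congr rfl fun i _ => by ring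
  have hbound : ∑ j, ∑ i, w j * (M j i - ite (j = i) (-1:ℝ) 0) * w i
      ≤ ε * (p * s) := by
    have step1 : ∀ j i, w j * (M j i - ite (j = i) (-1:ℝ) 0) * w i
        ≤ ε * ((w j ^ 2 + w i ^ 2) / 2) := by
      intro j i
      have h1 := hM j i
      have h2 : |w j * (M j i - ite (j = i) (-1:ℝ) 0) * w i|
          ≤ ε * (|w j| * |w i|) := by
        rw [abs_mul, abs_mul]
        calc |w j| * |M j i - ite (j = i) (-1:ℝ) 0| * |w i|
            ≤ |w j| * ε * |w i| :=
              mul_le_mul_of_nonneg_right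
                (mul_le_mul_of_nonneg_left h1 (abs_nonneg (w j))) (abs_nonneg (w i))
          _ = ε * (|w j| * |w i|) := by ring
      have h3 : |w j| * |w i| ≤ (w j ^ 2 + w i ^ 2) / 2 := by
        nlinarith [sq_nonneg (|w j| - |w i|), sq_abs (w j), sq_abs (w i)]
      calc w j * (M j i - ite (j = i) (-1:ℝ) 0) * w i
          ≤ |w j * (M j i - ite (j = i) (-1:ℝ) 0) * w i| := le_abs_self _
        _ ≤ ε * (|w j| * |w i|) := h2
        _ ≤ ε * ((w j ^ 2 + w i ^ 2) / 2) := by nlinarith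
    calc ∑ j, ∑ i, w j * (M j i - ite (j = i) (-1:ℝ) 0) * w i
        ≤ ∑ j, ∑ i, ε * ((w j ^ 2 + w i ^ 2) / 2) :=
          Finset.sum_le_sum fun j _ => Finset.sum_le_sum fun i _ => step1 j i
      _ = ε * (p * s) := by
          have h4 : ∀ j, ∑ i, ε * ((w j ^ 2 + w i ^ 2) / 2)
              = ε * ((p * w j ^ 2 + s) / 2) := by
            intro j
            rw [← Finset.mul_sum]
            congr 1
            rw [← Finset.sum_div]
            congr 1
            rw [Finset.sum_add_distrib, ← hs, Finset.sum_const, Finset.card_univ,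
              Fintype.card_fin, nsmul_eq_mul]
          rw [Finset.sum_congr rfl fun j _ => h4 j, ← Finset.mul_sum]
          congr 1
          rw [← Finset.sum_div, Finset.sum_add_distrib, ← Finset.mul_sum, ← hs,
            Finset.sum_const, Finset.card_univ, Fintype.card_fin, nsmul_eq_mul]
          ring
  have hfin : ε * (p * s) - s < 0 := by
    have : ε * (p:ℝ) < 1 := by
      rw [hε]
      rw [div_mul_eq_mul_div, one_mul, div_lt_one (by positivity)]
      nlinarith [Nat.cast_nonneg (α := ℝ) p]
    nlinarith
  have := expand
  nlinarith [hbound]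

/-! ### Treks and the trek-supported subspace -/

def trk (E : Finset (Fin p × Fin p)) (i j : Fin p) : Prop :=
  ∃ t : Fin p, Relation.ReflTransGen (fun a b : Fin p => (a, b) ∈ E) t i ∧
    Relation.ReflTransGen (fun a b : Fin p => (a, b) ∈ E) t j

lemma trk_refl (E : Finset (Fin p × Fin p)) (i : Fin p) : trk E i i :=
  ⟨i, Relation.ReflTransGen.refl, Relation.ReflTransGen.refl⟩

lemma trk_symm {E : Finset (Fin p × Fin p)} {i j : Fin p} (h : trk E i j) : trk E j i :=
  ⟨h.choose, h.choose_spec.2, h.choose_spec.1⟩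

lemma trk_extend {E : Finset (Fin p × Fin p)} {k i j : Fin p}
    (he : (k, i) ∈ E) (h : trk E k j) : trk E i j := by
  obtain ⟨t, h1, h2⟩ := h
  exact ⟨t, h1.tail he, h2⟩

lemma supp_lemma {E : Finset (Fin p × Fin p)} {M X : Matrix (Fin p) (Fin p) ℝ}
    (hM : InSupp (E : Set (Fin p × Fin p)) M)
    (hX : ∀ i j, ¬ trk E i j → X i j = 0)
    {i j : Fin p} (h : ¬ trk E i j) : (M * X + X * Mᵀ) i j = 0 := by
  have h1 : ∀ k, M i k * X k j = 0 := by
    intro k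
    by_cases hk : (k, i) ∈ E
    · have : ¬ trk E k j := fun ht => h (trk_extend hk ht)
      rw [hX k j this, mul_zero]
    · rw [hM k i (by simpa using hk), zero_mul]
  have h2 : ∀ k, X i k * Mᵀ k j = 0 := by
    intro k
    by_cases hk : (k, j) ∈ E
    · have : ¬ trk E i k := fun ht => h (trk_symm (trk_extend hk (trk_symm ht)))
      rw [hX i k this, zero_mul]
    · rw [Matrix.transpose_apply, hM k j (by simpa using hk), mul_zero]
  simp only [Matrix.add_apply, Matrix.mul_apply]
  rw [Finset.sum_eq_zero fun k _ => h1 k, Finset.sum_eq_zero fun k _ => h2 k, add_zero]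

def Wsub (E : Finset (Fin p × Fin p)) : Submodule ℝ (Matrix (Fin p) (Fin p) ℝ) where
  carrier := {X | Xᵀ = X ∧ ∀ i j, ¬ trk E i j → X i j = 0}
  add_mem' := by
    rintro a b ⟨ha1, ha2⟩ ⟨hb1, hb2⟩
    exact ⟨by rw [Matrix.transpose_add, ha1, hb1],
      fun i j h => by simp [Matrix.add_apply, ha2 i j h, hb2 i j h]⟩
  zero_mem' := ⟨Matrix.transpose_zero, fun _ _ _ => rfl⟩
  smul_mem' := by
    rintro c a ⟨h1, h2⟩
    exact ⟨by rw [Matrix.transpose_smul, h1],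
      fun i j h => by simp [Matrix.smul_apply, h2 i j h]⟩

lemma sol_mem (E : Finset (Fin p × Fin p)) (M S C : Matrix (Fin p) (Fin p) ℝ)
    (hM : InSupp (E : Set (Fin p × Fin p)) M)
    (hinj : ∀ X : Matrix (Fin p) (Fin p) ℝ, M * X + X * Mᵀ = 0 → X = 0)
    (hCsym : Cᵀ = C)
    (hCdiag : ∀ i j : Fin p, i ≠ j → C i j = 0)
    (hsol : M * S + S * Mᵀ + C = 0) :
    ∀ i j, ¬ trk E i j → S i j = 0 := by
  let LM : Matrix (Fin p) (Fin p) ℝ →ₗ[ℝ] Matrix (Fin p) (Fin p) ℝ :=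
    { toFun := fun X => M * X + X * Mᵀ
      map_add' := fun a b => by
        simp only [Matrix.mul_add, Matrix.add_mul, Matrix.transpose_add]; abel
      map_smul' := fun c a => by
        simp only [Matrix.mul_smul, Matrix.smul_mul, Matrix.transpose_smul,
          RingHom.id_apply, smul_add] }
  have hLMapp : ∀ X, LM X = M * X + X * Mᵀ := fun X => rfl
  have hLMinj : Function.Injective LM := by
    intro a b hab
    have h1 : LM (a - b) = 0 := by rw [map_sub, hab, sub_self]
    have := hinj (a - b) (by rw [← hLMapp, h1])
    exact sub_eq_zero.mp this
  have hinv : ∀ X ∈ Wsub E, LM X ∈ Wsub E := by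
    rintro X ⟨hX1, hX2⟩
    refine ⟨?_, fun i j h => supp_lemma hM hX2 h⟩
    rw [hLMapp, Matrix.transpose_add, Matrix.transpose_mul, Matrix.transpose_mul,
      Matrix.transpose_transpose, hX1]
    exact add_comm _ _
  let Lr := LM.restrict hinv
  have hLrinj : Function.Injective Lr := by
    intro a b hab
    exact Subtype.ext (hLMinj (congrArg Subtype.val hab))
  have hLrsurj : Function.Surjective Lr := LinearMap.surjective_of_injective hLrinj
  have hCmem : -C ∈ Wsub E := by
    refine ⟨by rw [Matrix.transpose_neg, hCsym], fun i j h => ?_⟩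
    have hne : i ≠ j := fun e => h (e ▸ trk_refl E i)
    simp [hCdiag i j hne]
  obtain ⟨Y, hY⟩ := hLrsurj ⟨-C, hCmem⟩
  have hYval : LM (Y : Matrix (Fin p) (Fin p) ℝ) = -C := congrArg Subtype.val hY
  have hS2 : LM S = -C := by
    rw [hLMapp]
    exact eq_neg_of_add_eq_zero_left hsol
  have hSY : S = (Y : Matrix (Fin p) (Fin p) ℝ) := hLMinj (hS2.trans hYval.symm)
  have := Y.2
  rw [← hSY] at this
  exact this.2

open Classical in
lemma exists_kernel (E : Finset (Fin p × Fin p)) (S : Matrix (Fin p) (Fin p) ℝ)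
    (hSsym : Sᵀ = S) (hSsupp : ∀ i j, ¬ trk E i j → S i j = 0)
    (hcard : (Finset.univ.filter
        (fun q : Fin p × Fin p => q.1 ≤ q.2 ∧ trk E q.1 q.2)).card < E.card) :
    ∃ K : Matrix (Fin p) (Fin p) ℝ, K ≠ 0 ∧ InSupp (E : Set (Fin p × Fin p)) K ∧
      K * S + S * Kᵀ = 0 := by
  set Tf := Finset.univ.filter
      (fun q : Fin p × Fin p => q.1 ≤ q.2 ∧ trk E q.1 q.2) with hTf
  let Φ : (E → ℝ) →ₗ[ℝ] Matrix (Fin p) (Fin p) ℝ :=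
    { toFun := edgeMatrix E
      map_add' := fun f g => by
        ext j i
        by_cases h : (i, j) ∈ E <;> simp [edgeMatrix, h]
      map_smul' := fun c f => by
        ext j i
        by_cases h : (i, j) ∈ E <;> simp [edgeMatrix, h] }
  let L : Matrix (Fin p) (Fin p) ℝ →ₗ[ℝ] Matrix (Fin p) (Fin p) ℝ :=
    { toFun := fun X => X * S + S * Xᵀ
      map_add' := fun a b => by
        simp only [Matrix.mul_add, Matrix.add_mul, Matrix.transpose_add]; abel
      map_smul' := fun c a => by
        simp only [Matrix.mul_smul, Matrix.smul_mul, Matrix.transpose_smul,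
          RingHom.id_apply, smul_add] }
  let Ψ : Matrix (Fin p) (Fin p) ℝ →ₗ[ℝ] (Tf → ℝ) :=
    { toFun := fun X q => X (q : Fin p × Fin p).1 (q : Fin p × Fin p).2
      map_add' := fun a b => rfl
      map_smul' := fun c a => rfl }
  let Θ := Ψ.comp (L.comp Φ)
  have hninj : ¬ Function.Injective Θ := by
    intro hinj
    have h1 := LinearMap.finrank_le_finrank_of_injective hinj
    rw [Module.finrank_pi, Module.finrank_pi] at h1
    rw [Fintype.card_coe, Fintype.card_coe] at h1
    omega
  have hker : ∃ f : E → ℝ, f ≠ 0 ∧ Θ f = 0 := by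
    rw [← LinearMap.ker_eq_bot] at hninj
    obtain ⟨f, hf1, hf2⟩ := Submodule.ne_bot_iff _ |>.mp hninj
    exact ⟨f, hf2, hf1⟩
  obtain ⟨f, hf0, hfker⟩ := hker
  refine ⟨edgeMatrix E f, ?_, ?_, ?_⟩
  · intro h
    apply hf0
    funext e
    rcases e with ⟨⟨i, j⟩, he⟩
    have h2 := congrFun (congrFun h j) i
    simpa [edgeMatrix, he] using h2
  · intro i j h
    have h' : (i, j) ∉ E := by simpa using h
    simp [edgeMatrix, h']
  · set K := edgeMatrix E f with hK
    set Y := K * S + S * Kᵀ with hY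
    have hKsupp : InSupp (E : Set (Fin p × Fin p)) K := by
      intro i j h
      have h' : (i, j) ∉ E := by simpa using h
      simp [hK, edgeMatrix, h']
    have hYsymm : Yᵀ = Y := by
      rw [hY, Matrix.transpose_add, Matrix.transpose_mul, Matrix.transpose_mul,
        Matrix.transpose_transpose, hSsym]
      exact add_comm _ _
    have hYsupp : ∀ i j, ¬ trk E i j → Y i j = 0 :=
      fun i j h => supp_lemma hKsupp hSsupp h
    have hYcoord : ∀ q : Tf, Y (q : Fin p × Fin p).1 (q : Fin p × Fin p).2 = 0 :=
      fun q => congrFun hfker q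
    ext i j
    simp only [Matrix.zero_apply]
    by_cases htr : trk E i j
    · by_cases hle : i ≤ j
      · exact hYcoord ⟨(i, j), by simp [hTf, hle, htr]⟩
      · have hle2 : j ≤ i := le_of_not_ge hle
        have hsymm := congrFun (congrFun hYsymm j) i
        rw [Matrix.transpose_apply] at hsymm
        rw [hsymm]
        exact hYcoord ⟨(j, i), by simp [hTf, hle2, trk_symm htr]⟩
    · exact hYsupp i j htr

lemma count_pairs : (Finset.univ.filter
    (fun q : Fin p × Fin p => q.1 ≤ q.2)).card = p * (p + 1) / 2 := by
  classical
  set c1 := (Finset.univ.filter (fun q : Fin p × Fin p => q.1 < q.2)).card with hc1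
  set c2 := (Finset.univ.filter (fun q : Fin p × Fin p => q.2 < q.1)).card with hc2
  set cd := (Finset.univ.filter (fun q : Fin p × Fin p => q.1 = q.2)).card with hcd
  have hdiag : cd = p := by
    rw [hcd]
    rw [show (Finset.univ.filter (fun q : Fin p × Fin p => q.1 = q.2))
        = Finset.univ.image (fun i : Fin p => (i, i)) from ?_]
    · rw [Finset.card_image_of_injective _ (fun a b h => by
        rw [Prod.mk.injEq] at h; exact h.1)]
      simp
    · ext ⟨a, b⟩
      simp only [Finset.mem_filter, Finset.mem_univ, true_and, Finset.mem_image]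
      constructor
      · rintro rfl; exact ⟨a, rfl⟩
      · rintro ⟨i, h⟩
        rw [Prod.mk.injEq] at h
        rw [← h.1, ← h.2]
  have hswap : c1 = c2 := by
    rw [hc1, hc2]
    apply Finset.card_bij (fun q _ => Prod.swap q)
    · rintro ⟨a, b⟩ hq
      simp only [Finset.mem_filter, Finset.mem_univ, true_and] at hq ⊢
      exact hq
    · rintro ⟨a, b⟩ _ ⟨c, d⟩ _ h
      simpa [Prod.ext_iff, and_comm] using h
    · rintro ⟨a, b⟩ hq
      refine ⟨(b, a), ?_, rfl⟩
      simp only [Finset.mem_filter, Finset.mem_univ, true_and] at hq ⊢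
      exact hq
  have htotal : c1 + (c2 + cd) = p * p := by
    have h1 : c1 + (Finset.univ.filter (fun q : Fin p × Fin p => ¬ q.1 < q.2)).card
        = p * p := by
      rw [hc1, Finset.card_filter_add_card_filter_not]
      simp [Finset.card_univ]
    have h2 : (Finset.univ.filter (fun q : Fin p × Fin p => ¬ q.1 < q.2)).card
        = c2 + cd := by
      have he : Finset.univ.filter (fun q : Fin p × Fin p => ¬ q.1 < q.2)
          = (Finset.univ.filter (fun q : Fin p × Fin p => q.2 < q.1))
            ∪ (Finset.univ.filter (fun q : Fin p × Fin p => q.1 = q.2)) := by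
        ext ⟨a, b⟩
        simp only [Finset.mem_filter, Finset.mem_univ, true_and, Finset.mem_union,
          not_lt]
        constructor
        · intro h
          rcases lt_or_eq_of_le h with h | h
          · exact Or.inl h
          · exact Or.inr h.symm
        · rintro (h | h)
          · exact h.le
          · exact h.ge
      rw [he, Finset.card_union_of_disjoint]
      rw [Finset.disjoint_filter]
      rintro ⟨a, b⟩ _ h1 h2
      exact absurd h2 (ne_of_gt h1)
    omega
  have hA : (Finset.univ.filter (fun q : Fin p × Fin p => q.1 ≤ q.2)).card
      = c1 + cd := by
    have he : Finset.univ.filter (fun q : Fin p × Fin p => q.1 ≤ q.2)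
        = (Finset.univ.filter (fun q : Fin p × Fin p => q.1 < q.2))
          ∪ (Finset.univ.filter (fun q : Fin p × Fin p => q.1 = q.2)) := by
      ext ⟨a, b⟩
      simp only [Finset.mem_filter, Finset.mem_univ, true_and, Finset.mem_union]
      constructor
      · intro h
        rcases lt_or_eq_of_le h with h | h
        · exact Or.inl h
        · exact Or.inr h
      · rintro (h | h)
        · exact h.le
        · exact h.le
    rw [he, Finset.card_union_of_disjoint]
    rw [Finset.disjoint_filter]
    rintro ⟨a, b⟩ _ h1 h2
    exact absurd h2 (ne_of_lt h1)
  have hq : p * (p + 1) = p * p + p := by ring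
  omega

end AuxLyap


/-- for diagonal positive definite `C`, generic identifiability implies
`|E| ≤ p(p+1)/2 − N`, where `N` is the number of unordered pairs of vertices with no
trek between them. -/
theorem generic_identifiability_edge_bound {p : ℕ}
    (E : Finset (Fin p × Fin p)) (hloops : ∀ i : Fin p, (i, i) ∈ E)
    (C : Matrix (Fin p) (Fin p) ℝ) (hC : C.PosDef)
    (hdiag : ∀ i j : Fin p, i ≠ j → C i j = 0)
    (hgen : GenericallyIdentifiable E C) :
    E.card +
      {q : Fin p × Fin p | q.1 < q.2 ∧
        ¬ ∃ t : Fin p,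
          Relation.ReflTransGen (fun a b : Fin p => (a, b) ∈ E) t q.1 ∧
          Relation.ReflTransGen (fun a b : Fin p => (a, b) ∈ E) t q.2}.ncard
      ≤ p * (p + 1) / 2 := by
  classical
  by_contra hcon
  rw [not_le] at hcon
  -- identify the no-trek set with a Finset
  have hNset : {q : Fin p × Fin p | q.1 < q.2 ∧
      ¬ ∃ t : Fin p,
        Relation.ReflTransGen (fun a b : Fin p => (a, b) ∈ E) t q.1 ∧
        Relation.ReflTransGen (fun a b : Fin p => (a, b) ∈ E) t q.2}
      = ↑(Finset.univ.filter
          (fun q : Fin p × Fin p => q.1 < q.2 ∧ ¬ AuxLyap.trk E q.1 q.2)) := by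
    ext q
    simp [AuxLyap.trk]
  rw [hNset, Set.ncard_coe_finset] at hcon
  -- counting: treks plus non-treks partition the pairs i ≤ j
  have hpart : (Finset.univ.filter
        (fun q : Fin p × Fin p => q.1 ≤ q.2 ∧ AuxLyap.trk E q.1 q.2)).card
      + (Finset.univ.filter
        (fun q : Fin p × Fin p => q.1 < q.2 ∧ ¬ AuxLyap.trk E q.1 q.2)).card
      = p * (p + 1) / 2 := by
    have hsum := Finset.card_filter_add_card_filter_not
      (s := Finset.univ.filter (fun q : Fin p × Fin p => q.1 ≤ q.2))
      (p := fun q : Fin p × Fin p => AuxLyap.trk E q.1 q.2)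
    simp only [Finset.filter_filter] at hsum
    have heq2 : Finset.univ.filter
        (fun q : Fin p × Fin p => q.1 ≤ q.2 ∧ ¬ AuxLyap.trk E q.1 q.2)
        = Finset.univ.filter
        (fun q : Fin p × Fin p => q.1 < q.2 ∧ ¬ AuxLyap.trk E q.1 q.2) := by
      ext ⟨a, b⟩
      simp only [Finset.mem_filter, Finset.mem_univ, true_and]
      constructor
      · rintro ⟨h1, h2⟩
        refine ⟨lt_of_le_of_ne h1 (fun he => h2 ?_), h2⟩
        exact he ▸ AuxLyap.trk_refl E a
      · rintro ⟨h1, h2⟩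
        exact ⟨h1.le, h2⟩
    rw [heq2] at hsum
    rw [AuxLyap.count_pairs] at hsum
    convert hsum using 3
  have hTlt : (Finset.univ.filter
      (fun q : Fin p × Fin p => q.1 ≤ q.2 ∧ AuxLyap.trk E q.1 q.2)).card < E.card := by
    omega
  -- the ball of dissipative parameters
  set f₀ : E → ℝ := fun e =>
    if (e : Fin p × Fin p).1 = (e : Fin p × Fin p).2 then (-1 : ℝ) else 0 with hf₀
  set ε : ℝ := 1 / (2 * (p + 1)) with hε
  have hεpos : 0 < ε := by positivity
  have hball : Metric.ball f₀ ε ⊆ {f : E → ℝ | IsStableMat (edgeMatrix E f) ∧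
      Fiber (E : Set (Fin p × Fin p)) C (edgeMatrix E f) ≠ {edgeMatrix E f}} := by
    intro f hf
    have hfc : ∀ e : E, |f e - (if (e : Fin p × Fin p).1 = (e : Fin p × Fin p).2
        then (-1 : ℝ) else 0)| ≤ 1 / (2 * (p + 1)) := by
      intro e
      rw [Metric.mem_ball] at hf
      have := (dist_pi_lt_iff hεpos).mp hf e
      rw [Real.dist_eq] at this
      exact le_of_lt (by rw [← hε] at *; exact this)
    have hdiss := AuxLyap.diss_ball E hloops f hfc
    set M := edgeMatrix E f with hM
    have hMsupp : InSupp (E : Set (Fin p × Fin p)) M := by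
      intro i j h
      have h' : (i, j) ∉ E := by simpa using h
      simp [hM, edgeMatrix, h']
    have hCsym : Cᵀ = C := by
      have := hC.1
      rwa [Matrix.IsHermitian, Matrix.conjTranspose_eq_transpose_of_trivial] at this
    -- M is stable: Lyapunov certificate S = 1, C' = -(M + Mᵀ)
    have hDissC : (-(M + Mᵀ)).PosDef := by
      refine Matrix.PosDef.of_dotProduct_mulVec_pos ?_ ?_
      · rw [Matrix.IsHermitian, Matrix.conjTranspose_eq_transpose_of_trivial,
          Matrix.transpose_neg, Matrix.transpose_add, Matrix.transpose_transpose,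
          add_comm]
      · intro x hx
        have h1 : x ⬝ᵥ ((-(M + Mᵀ)) *ᵥ x) = -(x ⬝ᵥ (M *ᵥ x) + x ⬝ᵥ (Mᵀ *ᵥ x)) := by
          rw [Matrix.neg_mulVec, Matrix.add_mulVec, dotProduct_neg,
            dotProduct_add]
        have h2 := AuxLyap.quadT M x
        have h3 := hdiss x hx
        simp only [star_trivial]
        rw [h1, h2]
        linarith
    have hMstable : IsStableMat M := by
      refine AuxLyap.stable_of_lyap M 1 (-(M + Mᵀ)) Matrix.PosDef.one hDissC ?_
      rw [Matrix.mul_one, Matrix.one_mul]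
      abel
    refine ⟨hMstable, ?_⟩
    by_cases hex : ∃ S : Matrix (Fin p) (Fin p) ℝ, S.PosDef ∧ M * S + S * Mᵀ + C = 0
    · obtain ⟨S, hSpd, hSeq⟩ := hex
      have hSsym : Sᵀ = S := by
        have := hSpd.1
        rwa [Matrix.IsHermitian, Matrix.conjTranspose_eq_transpose_of_trivial] at this
      have hinjX : ∀ X : Matrix (Fin p) (Fin p) ℝ, M * X + X * Mᵀ = 0 → X = 0 :=
        AuxLyap.diss_inj M hdiss
      have hSsupp := AuxLyap.sol_mem E M S C hMsupp hinjX hCsym hdiag hSeq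
      obtain ⟨K, hK0, hKsupp, hKeq⟩ := AuxLyap.exists_kernel E S hSsym hSsupp hTlt
      intro hfib
      have heq2 : (M + K) * S + S * (M + K)ᵀ + C = 0 := by
        have : (M + K) * S + S * (M + K)ᵀ + C
            = (M * S + S * Mᵀ + C) + (K * S + S * Kᵀ) := by
          rw [Matrix.add_mul, Matrix.transpose_add, Matrix.mul_add]
          abel
        rw [this, hSeq, hKeq, add_zero]
      have hmem : (M + K) ∈ Fiber (E : Set (Fin p × Fin p)) C M := by
        refine ⟨?_, ?_, S, hSpd, hSeq, heq2⟩
        · intro i j h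
          rw [Matrix.add_apply, hMsupp i j h, hKsupp i j h, add_zero]
        · exact AuxLyap.stable_of_lyap _ S C hSpd hC heq2
      rw [hfib] at hmem
      have : M + K = M := hmem
      exact hK0 (by
        have := congrArg (fun X => X - M) this
        simpa using this)
    · intro hfib
      have hMmem : M ∈ Fiber (E : Set (Fin p × Fin p)) C M := by
        rw [hfib]; rfl
      obtain ⟨-, -, S, hSpd, hSeq, -⟩ := hMmem
      exact hex ⟨S, hSpd, hSeq⟩
  have h1 : volume (Metric.ball f₀ ε) = 0 := measure_mono_null hball hgen
  have h2 : 0 < volume (Metric.ball f₀ ε) := Metric.measure_ball_pos _ _ hεpos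
  exact absurd h1 h2.ne'
end
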